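/- arXiv:1905.09078 — 6 statements merged into one kernel-verified Lean document; each statement's English description precedes it below -/
import Mathlib

section
/- Let Q be a positive definite symmetric n×n real matrix with det Q = 1 and tr Q ≤ R + n for some R > 0, and set q = tr Q − n ≥ 0. Then every eigenvalue λ of Q satisfies |λ − 1| ≤ (2(n−1)/n)^{1/2} · (R+n)^{1 + 1/(2(n−1))} · q^{1/2}. -/
open Real Set


/-- Bernoulli step: derivative sign on [1,K]. -/
lemma deriv_sign_right {β K t : ℝ} (hβ : 1 ≤ β) (hK : 1 ≤ K) (ht : 1 ≤ t) (htK : t ≤ K) :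
    β * K ^ (-(β+1)) * (t - 1) ≤ 1 - t ^ (-β) := by
  have ht0 : (0:ℝ) < t := lt_of_lt_of_le one_pos ht
  have hK0 : (0:ℝ) < K := lt_of_lt_of_le one_pos hK
  have hb : 1 + β * (t - 1) ≤ t ^ β := by
    have := one_add_mul_self_le_rpow_one_add (s := t - 1) (by linarith) hβ
    simpa using this
  have htβ : t ^ β ≤ K ^ β := Real.rpow_le_rpow ht0.le htK (by linarith)
  have htβpos : (0:ℝ) < t ^ β := Real.rpow_pos_of_pos ht0 _
  have hKβpos : (0:ℝ) < K ^ β := Real.rpow_pos_of_pos hK0 _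
  have h1 : 1 - t ^ (-β) = (t ^ β - 1) / t ^ β := by
    rw [Real.rpow_neg ht0.le]
    field_simp
  rw [h1]
  have h2 : β * (t - 1) / K ^ β ≤ (t ^ β - 1) / t ^ β := by
    rw [div_le_div_iff₀ hKβpos htβpos]
    have h3 : (0:ℝ) ≤ β * (t-1) := mul_nonneg (by linarith) (by linarith)
    nlinarith
  refine le_trans ?_ h2
  rw [Real.rpow_neg hK0.le, Real.rpow_add hK0, Real.rpow_one]
  rw [mul_inv, div_eq_mul_inv]
  have hKinv : K⁻¹ ≤ 1 := inv_le_one_of_one_le₀ hK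
  have h3 : (0:ℝ) ≤ β * (t-1) := mul_nonneg (by linarith) (by linarith)
  nlinarith [inv_pos.2 hKβpos, inv_pos.2 hK0, mul_nonneg h3 (inv_pos.2 hKβpos).le]


lemma deriv_sign_left {β K t : ℝ} (hβ : 1 ≤ β) (hK : 1 ≤ K) (ht : 0 < t) (ht1 : t ≤ 1) :
    1 - t ^ (-β) ≤ β * K ^ (-(β+1)) * (t - 1) := by
  have hinv : (0:ℝ) < t⁻¹ := inv_pos.2 ht
  have hb : 1 + β * (t⁻¹ - 1) ≤ (t⁻¹) ^ β := by
    have := one_add_mul_self_le_rpow_one_add (s := t⁻¹ - 1) (by linarith) hβ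
    simpa using this
  have heq : t ^ (-β) = (t⁻¹) ^ β := by
    rw [Real.rpow_neg ht.le, ← Real.inv_rpow ht.le]
  have hinvt : 1 - t ≤ t⁻¹ - 1 := by
    have h2 : t * (t⁻¹ - 1 - (1 - t)) = (1-t)^2 := by
      field_simp
    nlinarith [sq_nonneg (1-t)]
  have h1 : 1 - t ^ (-β) ≤ β * (t - 1) := by
    rw [heq]
    nlinarith
  refine h1.trans ?_
  have hKp : (0:ℝ) < K ^ (-(β+1)) := Real.rpow_pos_of_pos (by linarith) _
  have hK1 : K ^ (-(β+1)) ≤ 1 := by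
    apply Real.rpow_le_one_of_one_le_of_nonpos hK (by linarith)
  nlinarith [mul_nonneg (mul_nonneg (by linarith : (0:ℝ) ≤ β) (by linarith : (0:ℝ) ≤ 1 - t)) (by linarith : (0:ℝ) ≤ 1 - K ^ (-(β+1)))]

lemma key_lower {α K t : ℝ} (hα : 0 < α) (hK : 1 ≤ K) (ht : 0 < t) (htK : t ≤ K) :
    ((α+1)/2) * K ^ (-(α+2)) * (t-1)^2 ≤ t + (1/α) * t^(-α) - (1/α + 1) := by
  set c : ℝ := ((α+1)/2) * K ^ (-(α+2)) with hc
  set φ : ℝ → ℝ := fun x => x + (1/α) * x^(-α) - (1/α + 1) - c*(x-1)^2 with hφ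
  have hc2 : 2 * c = (α+1) * K ^ (-(α+1+1)) := by
    rw [hc]; ring_nf
  have hderiv : ∀ x : ℝ, 0 < x →
      HasDerivAt φ (1 - x^(-(α+1)) - 2*c*(x-1)) x := by
    intro x hx
    have h1 : HasDerivAt (fun x : ℝ => x ^ (-α)) (-α * x ^ (-α-1)) x :=
      Real.hasDerivAt_rpow_const (Or.inl hx.ne')
    have h2 := (((hasDerivAt_id x).add (h1.const_mul (1/α))).sub_const (1/α + 1)).sub
      ((((hasDerivAt_id x).sub_const 1).pow 2).const_mul c)
    convert h2 using 1
    · rfl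
    · rfl
    · rfl
    have hxa : x ^ (-α-1) = x ^ (-(α+1)) := by ring_nf
    rw [hxa]
    simp only [id_eq]
    field_simp
    ring
  have hφ1 : φ 1 = 0 := by simp [hφ, Real.one_rpow]; ring
  have hmain : 0 ≤ φ t := by
    rcases le_total 1 t with h1t | ht1
    · have hmono : MonotoneOn φ (Icc 1 K) := by
        apply monotoneOn_of_deriv_nonneg (convex_Icc 1 K)
        · intro x hx
          exact (hderiv x (by linarith [hx.1])).continuousAt.continuousWithinAt
        · intro x hx
          rw [interior_Icc] at hx
          exact (hderiv x (by linarith [hx.1])).differentiableAt.differentiableWithinAt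
        · intro x hx
          rw [interior_Icc] at hx
          rw [(hderiv x (by linarith [hx.1])).deriv]
          have := deriv_sign_right (β := α+1) (K := K) (t := x)
            (by linarith) hK hx.1.le hx.2.le
          rw [← hc2] at this
          linarith
      have := hmono (left_mem_Icc.2 (by linarith)) ⟨h1t, htK⟩ h1t
      rw [hφ1] at this; exact this
    · have hanti : AntitoneOn φ (Icc t 1) := by
        apply antitoneOn_of_deriv_nonpos (convex_Icc t 1)
        · intro x hx
          exact (hderiv x (by linarith [hx.1])).continuousAt.continuousWithinAt
        · intro x hx
          rw [interior_Icc] at hx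
          exact (hderiv x (by linarith [hx.1])).differentiableAt.differentiableWithinAt
        · intro x hx
          rw [interior_Icc] at hx
          rw [(hderiv x (by linarith [hx.1])).deriv]
          have := deriv_sign_left (β := α+1) (K := K) (t := x)
            (by linarith) hK (by linarith [hx.1]) hx.2.le
          rw [← hc2] at this
          linarith
      have := hanti (left_mem_Icc.2 ht1) (right_mem_Icc.2 ht1) ht1
      rw [hφ1] at this; exact this
  simp only [hφ] at hmain
  linarith

/-- Let `Q` be a positive definite symmetric `n×n` real matrix with `det Q = 1` and
`tr Q ≤ R + n` for some `R > 0`, and set `q = tr Q − n ≥ 0`. Then every eigenvalue `μ`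
of `Q` satisfies `|μ − 1| ≤ (2(n−1)/n)^{1/2} (R+n)^{1 + 1/(2(n−1))} q^{1/2}`. -/
theorem eigenvalue_near_one_bound (n : ℕ) (Q : Matrix (Fin n) (Fin n) ℝ)
    (hQ : Q.PosDef) (hdet : Q.det = 1) (R : ℝ) (hR : 0 < R) (htr : Q.trace ≤ R + n) :
    ∀ (μ : ℝ) (v : Fin n → ℝ), v ≠ 0 → Q.mulVec v = μ • v →
      |μ - 1| ≤ Real.sqrt (2 * ((n : ℝ) - 1) / n) *
        (R + n) ^ ((1 : ℝ) + 1 / (2 * ((n : ℝ) - 1))) * Real.sqrt (Q.trace - n) := by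
  intro μ v hv hmul
  rcases Nat.eq_zero_or_pos n with hn0 | hn1
  · subst hn0; exact absurd (Subsingleton.elim v 0) hv
  have hH : Q.IsHermitian := hQ.1
  -- μ is one of the eigenvalues
  have hμmem : μ ∈ spectrum ℝ Q := by
    have hv' : Matrix.toLinAlgEquiv' Q v = μ • v := by
      simpa [Matrix.toLinAlgEquiv', LinearMap.toMatrixAlgEquiv',
        Matrix.toLin'_apply] using hmul
    have heig : Module.End.HasEigenvalue (Matrix.toLinAlgEquiv' Q) μ :=
      Module.End.hasEigenvalue_of_hasEigenvector
        ⟨Module.End.mem_eigenspace_iff.2 hv', hv⟩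
    have := heig.mem_spectrum
    rwa [AlgEquiv.spectrum_eq Matrix.toLinAlgEquiv'] at this
  rw [hH.spectrum_real_eq_range_eigenvalues] at hμmem
  obtain ⟨i, hi⟩ := hμmem
  set lam : Fin n → ℝ := hH.eigenvalues with hlam
  have hpos : ∀ j, 0 < lam j := fun j => hQ.eigenvalues_pos j
  -- trace = sum of eigenvalues
  have htrace : Q.trace = ∑ j, lam j := by
    have hU : star (hH.eigenvectorUnitary : Matrix (Fin n) (Fin n) ℝ) *
        (hH.eigenvectorUnitary : Matrix (Fin n) (Fin n) ℝ) = 1 :=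
      Matrix.mem_unitaryGroup_iff'.mp (hH.eigenvectorUnitary).2
    calc Q.trace
        = ((hH.eigenvectorUnitary : Matrix (Fin n) (Fin n) ℝ) *
            Matrix.diagonal (RCLike.ofReal ∘ hH.eigenvalues) *
            star (hH.eigenvectorUnitary : Matrix (Fin n) (Fin n) ℝ)).trace := by
          conv_lhs => rw [hH.spectral_theorem]
          rw [Unitary.conjStarAlgAut_apply]
      _ = (star (hH.eigenvectorUnitary : Matrix (Fin n) (Fin n) ℝ) *
            ((hH.eigenvectorUnitary : Matrix (Fin n) (Fin n) ℝ) *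
              Matrix.diagonal (RCLike.ofReal ∘ hH.eigenvalues))).trace :=
          Matrix.trace_mul_comm _ _
      _ = (Matrix.diagonal (RCLike.ofReal ∘ hH.eigenvalues)).trace := by
          rw [← Matrix.mul_assoc, hU, Matrix.one_mul]
      _ = ∑ j, lam j := by
          simp [Matrix.trace_diagonal, hlam]
  -- det = product of eigenvalues
  have hprod : ∏ j, lam j = 1 := by
    have := hH.det_eq_prod_eigenvalues
    rw [hdet] at this
    exact_mod_cast this.symm
  -- positivity of μ, μ ≤ trace
  have hμpos : 0 < μ := hi ▸ hpos i
  have hμtr : μ ≤ Q.trace := by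
    rw [htrace, ← hi]
    exact Finset.single_le_sum (fun j _ => (hpos j).le) (Finset.mem_univ i)
  -- n = 1 case
  rcases eq_or_lt_of_le (Nat.succ_le_of_lt hn1) with hn1' | hn2
  · have hn : n = 1 := hn1'.symm
    subst hn
    have : μ = 1 := by
      have : ∏ j, lam j = lam i := by
        rw [show (Finset.univ : Finset (Fin 1)) = {i} by
          simp [Finset.eq_singleton_iff_unique_mem, Subsingleton.elim _ i],
          Finset.prod_singleton]
      rw [this, hi] at hprod
      exact hprod
    rw [this]
    simp only [sub_self, abs_zero]
    positivity
  -- now n ≥ 2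
  have hn2' : (2:ℝ) ≤ (n:ℝ) := by exact_mod_cast hn2
  have hne : ((n:ℝ) - 1) ≠ 0 := by linarith
  have hnpos : (0:ℝ) < (n:ℝ) - 1 := by linarith
  set α : ℝ := 1 / ((n:ℝ) - 1) with hα
  have hαpos : 0 < α := by positivity
  set K : ℝ := R + n with hK
  have hK1 : (1:ℝ) ≤ K := by rw [hK]; linarith
  have hμK : μ ≤ K := le_trans hμtr htr
  -- AM-GM on the other eigenvalues
  have hAMGM : μ + ((n:ℝ) - 1) * μ ^ (-α) ≤ Q.trace := by
    have hcard : ((Finset.univ.erase i).card : ℝ) = (n:ℝ) - 1 := by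
      rw [Finset.card_erase_of_mem (Finset.mem_univ i)]
      simp only [Finset.card_univ, Fintype.card_fin]
      have : 1 ≤ n := hn1
      push_cast [Nat.cast_sub this]
      ring
    have hgm := Real.geom_mean_le_arith_mean_weighted (Finset.univ.erase i)
      (fun _ => α) lam (fun _ _ => hαpos.le)
      (by rw [Finset.sum_const, nsmul_eq_mul, hcard, hα]; field_simp)
      (fun j _ => (hpos j).le)
    rw [Real.finset_prod_rpow _ _ (fun j _ => (hpos j).le)] at hgm
    have hperase : ∏ j ∈ Finset.univ.erase i, lam j = μ⁻¹ := by
      have := Finset.mul_prod_erase Finset.univ lam (Finset.mem_univ i)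
      rw [hprod, hi] at this
      field_simp
      linarith [this]
    have hserase : ∑ j ∈ Finset.univ.erase i, lam j = Q.trace - μ := by
      have h := Finset.sum_erase_add Finset.univ lam (Finset.mem_univ i)
      rw [htrace]
      linarith [h, hi]
    rw [hperase, ← Finset.mul_sum, hserase] at hgm
    have hμa : μ⁻¹ ^ α = μ ^ (-α) := by
      rw [Real.rpow_neg hμpos.le, ← Real.inv_rpow hμpos.le]
    rw [hμa] at hgm
    have hα1 : ((n:ℝ) - 1) * α = 1 := by rw [hα]; field_simp
    nlinarith [hgm, hnpos]
  -- apply the key analytic lemma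
  have hkey := key_lower hαpos hK1 hμpos hμK
  have h1α : 1/α = (n:ℝ) - 1 := by rw [hα, one_div_one_div]
  rw [h1α] at hkey
  set q : ℝ := Q.trace - n with hqdef
  set c : ℝ := ((α+1)/2) * K ^ (-(α+2)) with hc
  have hK0 : (0:ℝ) < K := by linarith
  have hcpos : 0 < c := by
    rw [hc]; positivity
  have hq : c * (μ-1)^2 ≤ q := by
    refine hkey.trans ?_
    rw [hqdef]
    linarith [hAMGM]
  have hq0 : (0:ℝ) ≤ q := le_trans (by positivity) hq
  set B : ℝ := Real.sqrt (2 * ((n:ℝ) - 1) / n) *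
      K ^ ((1:ℝ) + 1 / (2 * ((n:ℝ) - 1))) with hB
  have hBnn : 0 ≤ B := by rw [hB]; positivity
  have hB2 : B^2 = 1/c := by
    rw [hB, mul_pow, Real.sq_sqrt (by positivity)]
    rw [← Real.rpow_natCast (K ^ ((1:ℝ) + 1 / (2 * ((n:ℝ) - 1)))) 2,
      ← Real.rpow_mul hK0.le]
    have he : ((1:ℝ) + 1 / (2 * ((n:ℝ) - 1))) * ((2:ℕ):ℝ) = α + 2 := by
      rw [hα]; push_cast; field_simp; ring
    rw [he, hc, Real.rpow_neg hK0.le]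
    have hKa : (0:ℝ) < K ^ (α+2) := Real.rpow_pos_of_pos hK0 _
    rw [hα]
    field_simp
    ring_nf
  calc |μ - 1| = Real.sqrt ((μ-1)^2) := (Real.sqrt_sq_eq_abs _).symm
    _ ≤ Real.sqrt (1/c * q) := by
        apply Real.sqrt_le_sqrt
        rw [one_div_mul_eq_div, le_div_iff₀ hcpos]
        linarith [hq]
    _ = Real.sqrt (1/c) * Real.sqrt q := Real.sqrt_mul (by positivity) q
    _ = B * Real.sqrt q := by rw [← hB2, Real.sqrt_sq hBnn]
end

section
/- Let Φ be a reduced root system with positive roots Φ⁺ and simple roots Δ. For a positive root α, let V_α be the linear span of α together with all roots β, γ appearing in decompositions α = β + γ with β, γ ∈ Φ⁺. Then V_α equals the span of the simple roots δ with δ ≺ α (i.e., δ occurs with positive coefficient in the expansion of α in simple roots). -/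
open RealInnerProductSpace

/-- A reduced crystallographic root system `Φ` in a real inner product space,
together with a base `Δ` (set of simple roots), so that every root is either a
nonnegative or a nonpositive combination of the simple roots. -/
structure RootSystemBase (V : Type*) [NormedAddCommGroup V] [InnerProductSpace ℝ V] where
  /-- the (finite) set of roots -/
  Φ : Finset V
  /-- the base (set of simple roots) -/
  Δ : Finset V
  ne_zero : ∀ α ∈ Φ, α ≠ (0 : V)
  base_sub : Δ ⊆ Φ
  /-- `Φ` is stable under the reflection in each root -/
  reflect_mem : ∀ α ∈ Φ, ∀ β ∈ Φ, β - (2 * ⟪β, α⟫ / ⟪α, α⟫) • α ∈ Φ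
  /-- crystallographic condition: all Cartan pairings are integers -/
  crystal : ∀ α ∈ Φ, ∀ β ∈ Φ, ∃ n : ℤ, 2 * ⟪β, α⟫ / ⟪α, α⟫ = (n : ℝ)
  /-- reduced: the only multiples of a root which are roots are `±` itself -/
  reduced : ∀ α ∈ Φ, ∀ t : ℝ, t • α ∈ Φ → t = 1 ∨ t = -1
  base_indep : LinearIndependent ℝ (Subtype.val : {x // x ∈ Δ} → V)
  /-- every root is a nonnegative or nonpositive combination of simple roots -/
  pos_or_neg : ∀ α ∈ Φ,
    (∃ c : V → ℝ, (∀ d, 0 ≤ c d) ∧ α = ∑ d ∈ Δ, c d • d) ∨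
    (∃ c : V → ℝ, (∀ d, 0 ≤ c d) ∧ α = -(∑ d ∈ Δ, c d • d))

namespace RootSystemBase

variable {V : Type*} [NormedAddCommGroup V] [InnerProductSpace ℝ V]

/-- `α` is a positive root: a root which is a nonnegative combination of simple roots. -/
def IsPos (R : RootSystemBase V) (α : V) : Prop :=
  α ∈ R.Φ ∧ ∃ c : V → ℝ, (∀ d, 0 ≤ c d) ∧ α = ∑ d ∈ R.Δ, c d • d

/-- `α` is a negative root: a root which is a nonpositive combination of simple roots. -/
def IsNeg (R : RootSystemBase V) (α : V) : Prop :=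
  α ∈ R.Φ ∧ ∃ c : V → ℝ, (∀ d, 0 ≤ c d) ∧ α = -(∑ d ∈ R.Δ, c d • d)

/-- `δ ≺ α` : the simple root `δ` occurs with positive coefficient in `α`. -/
def Prec (R : RootSystemBase V) (δ α : V) : Prop :=
  ∃ c : V → ℝ, (∀ d, 0 ≤ c d) ∧ α = ∑ d ∈ R.Δ, c d • d ∧ 0 < c δ

end RootSystemBase


section Aux

variable {V : Type*} [NormedAddCommGroup V] [InnerProductSpace ℝ V]

lemma inner_self_pos' {y : V} (hy : y ≠ 0) : (0:ℝ) < ⟪y, y⟫ :=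
  lt_of_le_of_ne real_inner_self_nonneg (Ne.symm (inner_self_ne_zero.mpr hy))

lemma parallel_of_sq {x y : V} (hy : y ≠ 0) (h : ⟪x, x⟫ * ⟪y, y⟫ ≤ ⟪x, y⟫ * ⟪x, y⟫) :
    x = (⟪x, y⟫ / ⟪y, y⟫) • y := by
  have hyy : (0:ℝ) < ⟪y, y⟫ := inner_self_pos' hy
  set t : ℝ := ⟪x, y⟫ / ⟪y, y⟫ with ht
  have expand : ⟪x - t • y, x - t • y⟫
      = ⟪x, x⟫ - 2 * t * ⟪x, y⟫ + t * t * ⟪y, y⟫ := by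
    rw [real_inner_sub_sub_self, real_inner_smul_right, real_inner_smul_left,
      real_inner_smul_right]
    ring
  have key : ⟪x - t • y, x - t • y⟫ ≤ 0 := by
    rw [expand, ht]
    have h1 : ⟪x, y⟫ / ⟪y, y⟫ * ⟪y, y⟫ = ⟪x, y⟫ := div_mul_cancel₀ _ hyy.ne'
    have h2 : ⟪x, x⟫ ≤ ⟪x, y⟫ * (⟪x, y⟫ / ⟪y, y⟫) := by
      rw [mul_div_assoc', le_div_iff₀ hyy]
      nlinarith
    nlinarith
  have h0 : x - t • y = 0 :=
    inner_self_eq_zero.mp (le_antisymm key real_inner_self_nonneg)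
  exact sub_eq_zero.mp h0

namespace RootSystemBase

variable (R : RootSystemBase V)

lemma inner_self_pos_of_mem {x : V} (hx : x ∈ R.Φ) : (0:ℝ) < ⟪x, x⟫ :=
  inner_self_pos' (R.ne_zero x hx)

lemma neg_mem {x : V} (hx : x ∈ R.Φ) : -x ∈ R.Φ := by
  have h := R.reflect_mem x hx x hx
  have hxx : (⟪x, x⟫ : ℝ) ≠ 0 := (R.inner_self_pos_of_mem hx).ne'
  have h2 : (2 * ⟪x, x⟫ / ⟪x, x⟫ : ℝ) = 2 := by field_simp
  rw [h2] at h
  have h3 : x - (2:ℝ) • x = -x := by module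
  rwa [h3] at h

lemma add_mem_of_inner_neg {x y : V} (hx : x ∈ R.Φ) (hy : y ∈ R.Φ)
    (hinner : ⟪x, y⟫ < 0) (hne : x + y ≠ 0) : x + y ∈ R.Φ := by
  obtain ⟨n, hn⟩ := R.crystal y hy x hx
  obtain ⟨m, hm⟩ := R.crystal x hx y hy
  have hxx := R.inner_self_pos_of_mem hx
  have hyy := R.inner_self_pos_of_mem hy
  have hyx : ⟪y, x⟫ = ⟪x, y⟫ := real_inner_comm x y
  have hn0 : (n:ℝ) < 0 := by rw [← hn]; exact div_neg_of_neg_of_pos (by linarith) hyy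
  have hm0 : (m:ℝ) < 0 := by rw [← hm, hyx]; exact div_neg_of_neg_of_pos (by linarith) hxx
  by_cases hncase : n = -1
  · have h := R.reflect_mem y hy x hx
    rw [hn, hncase] at h
    have h3 : x - ((-1:ℤ):ℝ) • y = x + y := by push_cast; module
    rwa [h3] at h
  by_cases hmcase : m = -1
  · have h := R.reflect_mem x hx y hy
    rw [hm, hmcase] at h
    have h3 : y - ((-1:ℤ):ℝ) • x = x + y := by push_cast; module
    rwa [h3] at h
  · -- both Cartan integers ≤ -2 : forces proportionality, contradiction
    have hn2 : n ≤ -2 := by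
      have : n < 0 := by exact_mod_cast hn0
      omega
    have hm2 : m ≤ -2 := by
      have : m < 0 := by exact_mod_cast hm0
      omega
    have hprod : (4:ℝ) ≤ (n:ℝ) * (m:ℝ) := by
      have : (4:ℤ) ≤ n * m := by nlinarith
      exact_mod_cast this
    have hsq : ⟪x, x⟫ * ⟪y, y⟫ ≤ ⟪x, y⟫ * ⟪x, y⟫ := by
      have hnm : (n:ℝ) * (m:ℝ) = 4 * (⟪x, y⟫ * ⟪x, y⟫) / (⟪x, x⟫ * ⟪y, y⟫) := by
        rw [← hn, ← hm, hyx]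
        field_simp
        ring
      rw [hnm, le_div_iff₀ (by positivity)] at hprod
      nlinarith
    have hpar : x = (⟪x, y⟫ / ⟪y, y⟫) • y := parallel_of_sq (R.ne_zero y hy) hsq
    have := R.reduced y hy (⟪x, y⟫ / ⟪y, y⟫) (hpar ▸ hx)
    have htneg : ⟪x, y⟫ / ⟪y, y⟫ < 0 := div_neg_of_neg_of_pos hinner hyy
    rcases this with h1 | h1
    · rw [h1] at htneg; norm_num at htneg
    · rw [h1, neg_one_smul] at hpar
      exact absurd (by rw [hpar]; abel) hne

lemma sub_mem_of_inner_pos {x y : V} (hx : x ∈ R.Φ) (hy : y ∈ R.Φ)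
    (hinner : 0 < ⟪x, y⟫) (hne : x ≠ y) : x - y ∈ R.Φ := by
  have h := R.add_mem_of_inner_neg hx (R.neg_mem hy) (by rw [inner_neg_right]; linarith)
    (by rw [← sub_eq_add_neg]; exact sub_ne_zero.mpr hne)
  rwa [← sub_eq_add_neg] at h


lemma exists_coords :
    ∃ g : V → (V →ₗ[ℝ] ℝ), ∀ δ ∈ R.Δ, g δ δ = 1 ∧ ∀ d ∈ R.Δ, d ≠ δ → g δ d = 0 := by
  classical
  have li : LinearIndepOn ℝ id (↑R.Δ : Set V) := R.base_indep
  let b := Module.Basis.extend li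
  refine ⟨fun δ =>
    if hδ : δ ∈ (↑R.Δ : Set V) then
      b.coord ⟨δ, li.subset_extend (Set.subset_univ _) hδ⟩ else 0, ?_⟩
  intro δ hδ
  have hδ' : δ ∈ (↑R.Δ : Set V) := hδ
  have hcoord : ∀ x : V, ∀ hx : x ∈ (↑R.Δ : Set V),
      b.coord ⟨δ, li.subset_extend (Set.subset_univ _) hδ'⟩ x
        = if (⟨x, li.subset_extend (Set.subset_univ _) hx⟩ :
            li.extend (Set.subset_univ _))
            = ⟨δ, li.subset_extend (Set.subset_univ _) hδ'⟩ then 1 else 0 := by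
    intro x hx
    have hxb : (b ⟨x, li.subset_extend (Set.subset_univ _) hx⟩ : V) = x :=
      Module.Basis.extend_apply_self li _
    rw [Module.Basis.coord_apply]
    conv_lhs => rw [← hxb]
    rw [Module.Basis.repr_self, Finsupp.single_apply]
  constructor
  · simp only [dif_pos hδ']
    rw [hcoord δ hδ', if_pos rfl]
  · intro d hd hne
    have hd' : d ∈ (↑R.Δ : Set V) := hd
    simp only [dif_pos hδ']
    rw [hcoord d hd', if_neg]
    simp only [Subtype.mk.injEq]
    exact hne

lemma coord_val {g : V → (V →ₗ[ℝ] ℝ)}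
    (hg : ∀ δ ∈ R.Δ, g δ δ = 1 ∧ ∀ d ∈ R.Δ, d ≠ δ → g δ d = 0)
    {δ : V} (hδ : δ ∈ R.Δ) (c : V → ℝ) :
    g δ (∑ d ∈ R.Δ, c d • d) = c δ := by
  rw [map_sum]
  have : ∀ d ∈ R.Δ, g δ (c d • d) = c d * g δ d := by
    intro d _; rw [map_smul]; rfl
  rw [Finset.sum_congr rfl this, Finset.sum_eq_single_of_mem δ hδ]
  · rw [(hg δ hδ).1, mul_one]
  · intro d hd hne
    rw [(hg δ hδ).2 d hd hne, mul_zero]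

lemma prec_iff {g : V → (V →ₗ[ℝ] ℝ)}
    (hg : ∀ δ ∈ R.Δ, g δ δ = 1 ∧ ∀ d ∈ R.Δ, d ≠ δ → g δ d = 0)
    {δ α : V} (hδ : δ ∈ R.Δ) (hα : R.IsPos α) :
    R.Prec δ α ↔ 0 < g δ α := by
  constructor
  · rintro ⟨c, _, hrep, hpos⟩
    rw [hrep, R.coord_val hg hδ]; exact hpos
  · intro hpos
    obtain ⟨_, c, hc, hrep⟩ := hα
    refine ⟨c, hc, hrep, ?_⟩
    rw [hrep, R.coord_val hg hδ] at hpos; exact hpos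

lemma isPos_f_pos {f : V →ₗ[ℝ] ℝ} (hf : ∀ d ∈ R.Δ, f d = 1)
    {α : V} (h : R.IsPos α) : 0 < f α := by
  obtain ⟨hΦ, c, hc, hrep⟩ := h
  have h1 : f α = ∑ d ∈ R.Δ, c d := by
    rw [hrep, map_sum]
    refine Finset.sum_congr rfl fun d hd => ?_
    rw [map_smul, smul_eq_mul, hf d hd, mul_one]
  rw [h1]
  rcases lt_or_eq_of_le (Finset.sum_nonneg fun d _ => hc d) with hlt | heq
  · exact hlt
  · exfalso
    apply R.ne_zero α hΦ
    rw [hrep]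
    refine Finset.sum_eq_zero fun d hd => ?_
    rw [(Finset.sum_eq_zero_iff_of_nonneg fun d _ => hc d).mp heq.symm d hd, zero_smul]

lemma isPos_add {x y : V} (hx : R.IsPos x) (hy : R.IsPos y) (hmem : x + y ∈ R.Φ) :
    R.IsPos (x + y) := by
  obtain ⟨_, cx, hcx, hrx⟩ := hx
  obtain ⟨_, cy, hcy, hry⟩ := hy
  refine ⟨hmem, fun d => cx d + cy d, fun d => add_nonneg (hcx d) (hcy d), ?_⟩
  rw [hrx, hry, ← Finset.sum_add_distrib]
  refine Finset.sum_congr rfl fun d _ => ?_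
  rw [add_smul]

lemma isPos_simple {δ : V} (hδ : δ ∈ R.Δ) : R.IsPos δ := by
  classical
  refine ⟨R.base_sub hδ, fun d => if d = δ then 1 else 0,
    fun d => by dsimp only; split <;> norm_num, ?_⟩
  have h1 : ∑ d ∈ R.Δ, (if d = δ then (1:ℝ) else 0) • d = δ := by
    rw [Finset.sum_eq_single_of_mem δ hδ]
    · rw [if_pos rfl, one_smul]
    · intro d _ hne
      rw [if_neg hne, zero_smul]
  exact h1.symm

lemma isPos_sub_simple {g : V → (V →ₗ[ℝ] ℝ)}
    (hg : ∀ δ ∈ R.Δ, g δ δ = 1 ∧ ∀ d ∈ R.Δ, d ≠ δ → g δ d = 0)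
    {α δ₀ : V} (hα : R.IsPos α) (hδ₀ : δ₀ ∈ R.Δ) (hne : α ≠ δ₀)
    (hmem : α - δ₀ ∈ R.Φ) : R.IsPos (α - δ₀) := by
  rcases R.pos_or_neg _ hmem with h | h
  · exact ⟨hmem, h⟩
  · exfalso
    obtain ⟨c', hc', hrep'⟩ := h
    obtain ⟨hΦ, c, hc, hrep⟩ := hα
    obtain ⟨_, cδ, hcδ, hrepδ⟩ := R.isPos_simple hδ₀
    have hsum : ∑ d ∈ R.Δ, (c d + c' d) • d = ∑ d ∈ R.Δ, cδ d • d := by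
      rw [← hrepδ]
      have h3 := hrep'
      rw [sub_eq_iff_eq_add] at h3
      have h2 : δ₀ = α + ∑ d ∈ R.Δ, c' d • d := by rw [h3]; abel
      rw [h2, hrep, ← Finset.sum_add_distrib]
      exact Finset.sum_congr rfl fun d _ => add_smul _ _ _
    have hco : ∀ d ∈ R.Δ, c d + c' d = cδ d := by
      intro d hd
      have h1 := congrArg (g d) hsum
      rw [R.coord_val hg hd, R.coord_val hg hd] at h1
      simpa using h1
    have hcoval : ∀ d ∈ R.Δ, d ≠ δ₀ → c d = 0 := by
      intro d hd hne'
      have h1 := hco d hd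
      have h2 : cδ d = 0 := by
        have h4 := congrArg (g d) hrepδ
        rw [R.coord_val hg hd, (hg d hd).2 δ₀ hδ₀ (Ne.symm hne')] at h4
        exact h4.symm
      rw [h2] at h1
      linarith [hc d, hc' d]
    have hαδ : α = c δ₀ • δ₀ := by
      rw [hrep, Finset.sum_eq_single_of_mem δ₀ hδ₀]
      intro d hd hne'
      rw [hcoval d hd hne', zero_smul]
    rcases R.reduced δ₀ (R.base_sub hδ₀) (c δ₀) (by rw [← hαδ]; exact hΦ) with h1 | h1
    · exact hne (by rw [hαδ, h1, one_smul])
    · have := hc δ₀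
      rw [h1] at this
      linarith


lemma key {g : V → (V →ₗ[ℝ] ℝ)}
    (hg : ∀ δ ∈ R.Δ, g δ δ = 1 ∧ ∀ d ∈ R.Δ, d ≠ δ → g δ d = 0)
    {f : V →ₗ[ℝ] ℝ} (hf : ∀ d ∈ R.Δ, f d = 1) (n : ℕ) :
    ∀ α : V, R.IsPos α → (R.Φ.filter (fun z => f z < f α)).card < n →
    ∀ δ ∈ R.Δ, R.Prec δ α →
    δ ∈ Submodule.span ℝ ({α} ∪ {β : V | ∃ γ : V, R.IsPos β ∧ R.IsPos γ ∧ α = β + γ}) := by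
  classical
  induction n with
  | zero => intro α _ hcard; exact absurd hcard (Nat.not_lt_zero _)
  | succ n ih =>
    intro α hα hcard δ hδ hprec
    set U := Submodule.span ℝ
      ({α} ∪ {β : V | ∃ γ : V, R.IsPos β ∧ R.IsPos γ ∧ α = β + γ}) with hU
    have hαΦ : α ∈ R.Φ := hα.1
    have hαα : (0:ℝ) < ⟪α, α⟫ := R.inner_self_pos_of_mem hαΦ
    obtain ⟨_, c, hc, hrep⟩ := hα
    have hex : ∃ δ₀ ∈ R.Δ, 0 < c δ₀ ∧ 0 < ⟪α, δ₀⟫ := by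
      by_contra hcon
      push_neg at hcon
      have h1 : ⟪α, α⟫ = ∑ d ∈ R.Δ, c d * ⟪d, α⟫ := by
        nth_rewrite 1 [hrep]
        rw [sum_inner]
        exact Finset.sum_congr rfl fun d _ => real_inner_smul_left _ _ _
      have h2 : ⟪α, α⟫ ≤ 0 := by
        rw [h1]
        refine Finset.sum_nonpos fun d hd => ?_
        rcases lt_or_eq_of_le (hc d) with hcd | hcd
        · have := hcon d hd hcd
          rw [real_inner_comm]
          exact mul_nonpos_of_nonneg_of_nonpos (le_of_lt hcd) this
        · rw [← hcd, zero_mul]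
      linarith
    obtain ⟨δ₀, hδ₀Δ, hcδ₀, hinner⟩ := hex
    have hδ₀Φ : δ₀ ∈ R.Φ := R.base_sub hδ₀Δ
    have hαpos : R.IsPos α := ⟨hαΦ, c, hc, hrep⟩
    have hδ₀pos : R.IsPos δ₀ := R.isPos_simple hδ₀Δ
    by_cases hcase : α = δ₀
    · have hδeq : δ = δ₀ := by
        by_contra hne
        have h1 := (R.prec_iff hg hδ hαpos).mp hprec
        rw [hcase, (hg δ hδ).2 δ₀ hδ₀Δ (Ne.symm hne)] at h1
        exact lt_irrefl 0 h1
      rw [hδeq, ← hcase]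
      exact Submodule.subset_span (Or.inl rfl)
    · set β := α - δ₀ with hβ
      have hβΦ : β ∈ R.Φ := R.sub_mem_of_inner_pos hαΦ hδ₀Φ hinner hcase
      have hβpos : R.IsPos β := R.isPos_sub_simple hg hαpos hδ₀Δ hcase hβΦ
      have hαβ : α = β + δ₀ := by rw [hβ]; abel
      have hβU : β ∈ U := Submodule.subset_span (Or.inr ⟨δ₀, hβpos, hδ₀pos, hαβ⟩)
      have hδ₀U : δ₀ ∈ U := Submodule.subset_span
        (Or.inr ⟨β, hδ₀pos, hβpos, by rw [hαβ]; abel⟩)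
      by_cases hδδ₀ : δ = δ₀
      · rw [hδδ₀]; exact hδ₀U
      · have hgβ : 0 < g δ β := by
          have h1 : 0 < g δ α := (R.prec_iff hg hδ hαpos).mp hprec
          have h2 : g δ δ₀ = 0 := (hg δ hδ).2 δ₀ hδ₀Δ (Ne.symm hδδ₀)
          have h3 : g δ β = g δ α - g δ δ₀ := by rw [hβ, map_sub]
          rw [h3, h2]; linarith
        have hprecβ : R.Prec δ β := (R.prec_iff hg hδ hβpos).mpr hgβ
        have hfβ : f β < f α := by
          have h3 : f β = f α - f δ₀ := by rw [hβ, map_sub]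
          rw [h3, hf δ₀ hδ₀Δ]; linarith
        have hcard' : (R.Φ.filter (fun z => f z < f β)).card < n := by
          have hsub : R.Φ.filter (fun z => f z < f β) ⊂ R.Φ.filter (fun z => f z < f α) := by
            refine (Finset.ssubset_iff_of_subset
              (Finset.monotone_filter_right R.Φ fun z _ hz => lt_trans hz hfβ)).mpr
              ⟨β, Finset.mem_filter.mpr ⟨hβΦ, hfβ⟩, fun hmem =>
                absurd (Finset.mem_filter.mp hmem).2 (lt_irrefl _)⟩
          have := Finset.card_lt_card hsub
          omega
        have hδUβ := ih β hβpos hcard' δ hδ hprecβ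
        have hsummand : ∀ x y : V, R.IsPos x → R.IsPos y → β = x + y → x ∈ U := by
          intro x y hx hy hxy
          have hxΦ := hx.1
          have hyΦ := hy.1
          have hxyδ : α = x + y + δ₀ := by rw [hαβ, hxy]
          have hfy : (0:ℝ) < f y := R.isPos_f_pos hf hy
          have hfx : (0:ℝ) < f x := R.isPos_f_pos hf hx
          by_cases h1 : ⟪x, δ₀⟫ < 0
          · have hne0 : x + δ₀ ≠ 0 := by
              intro h0
              have h5 : f (x + δ₀) = 0 := by rw [h0, map_zero]
              rw [map_add, hf δ₀ hδ₀Δ] at h5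
              linarith
            have hz : x + δ₀ ∈ R.Φ := R.add_mem_of_inner_neg hxΦ hδ₀Φ h1 hne0
            have hzpos : R.IsPos (x + δ₀) := R.isPos_add hx hδ₀pos hz
            have h2 : (x + δ₀) ∈ U := Submodule.subset_span
              (Or.inr ⟨y, hzpos, hy, by rw [hxyδ]; abel⟩)
            have h3 : x = (x + δ₀) - δ₀ := by abel
            rw [h3]
            exact Submodule.sub_mem _ h2 hδ₀U
          by_cases h2 : ⟪y, δ₀⟫ < 0
          · have hne0 : y + δ₀ ≠ 0 := by
              intro h0
              have h5 : f (y + δ₀) = 0 := by rw [h0, map_zero]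
              rw [map_add, hf δ₀ hδ₀Δ] at h5
              linarith
            have hz : y + δ₀ ∈ R.Φ := R.add_mem_of_inner_neg hyΦ hδ₀Φ h2 hne0
            have hzpos : R.IsPos (y + δ₀) := R.isPos_add hy hδ₀pos hz
            exact Submodule.subset_span
              (Or.inr ⟨y + δ₀, hx, hzpos, by rw [hxyδ]; abel⟩)
          by_cases h3 : 0 < ⟪α, x⟫
          · have hnex : α ≠ x := by
              intro h0
              have h7 : y + δ₀ = 0 := by
                have h8 : x + (y + δ₀) = x + 0 := by
                  rw [add_zero, ← add_assoc, ← hxyδ, h0]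
                exact add_left_cancel h8
              have h8 : f (y + δ₀) = 0 := by rw [h7, map_zero]
              rw [map_add, hf δ₀ hδ₀Δ] at h8
              linarith
            have hsub : α - x ∈ R.Φ := R.sub_mem_of_inner_pos hαΦ hxΦ h3 hnex
            have heq : α - x = y + δ₀ := by rw [hxyδ]; abel
            rw [heq] at hsub
            have hpos2 : R.IsPos (y + δ₀) := R.isPos_add hy hδ₀pos hsub
            exact Submodule.subset_span
              (Or.inr ⟨y + δ₀, hx, hpos2, by rw [hxyδ]; abel⟩)
          by_cases h4 : 0 < ⟪α, y⟫
          · have hney : α ≠ y := by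
              intro h0
              have h7 : x + δ₀ = 0 := by
                have h8 : y + (x + δ₀) = y + 0 := by
                  rw [add_zero, show y + (x + δ₀) = x + y + δ₀ from by abel, ← hxyδ, h0]
                exact add_left_cancel h8
              have h8 : f (x + δ₀) = 0 := by rw [h7, map_zero]
              rw [map_add, hf δ₀ hδ₀Δ] at h8
              linarith
            have hsub : α - y ∈ R.Φ := R.sub_mem_of_inner_pos hαΦ hyΦ h4 hney
            have heq : α - y = x + δ₀ := by rw [hxyδ]; abel
            rw [heq] at hsub
            have hpos2 : R.IsPos (x + δ₀) := R.isPos_add hx hδ₀pos hsub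
            have h5 : (x + δ₀) ∈ U := Submodule.subset_span
              (Or.inr ⟨y, hpos2, hy, by rw [hxyδ]; abel⟩)
            have h6 : x = (x + δ₀) - δ₀ := by abel
            rw [h6]
            exact Submodule.sub_mem _ h5 hδ₀U
          · exfalso
            push_neg at h1 h2 h3 h4
            have hδδ : (0:ℝ) < ⟪δ₀, δ₀⟫ := R.inner_self_pos_of_mem hδ₀Φ
            have e1 : ⟪α, δ₀⟫ = ⟪α, α⟫ - ⟪α, x⟫ - ⟪α, y⟫ := by
              have hδeq : δ₀ = α - x - y := by rw [hxyδ]; abel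
              nth_rewrite 1 [hδeq]
              rw [inner_sub_right, inner_sub_right]
            have e2 : ⟪α, δ₀⟫ = ⟪x, δ₀⟫ + ⟪y, δ₀⟫ + ⟪δ₀, δ₀⟫ := by
              nth_rewrite 1 [hxyδ]
              rw [inner_add_left, inner_add_left]
            have k1 : ⟪α, α⟫ ≤ ⟪α, δ₀⟫ := by rw [e1]; linarith
            have k2 : ⟪δ₀, δ₀⟫ ≤ ⟪α, δ₀⟫ := by rw [e2]; linarith
            have hsq : ⟪α, α⟫ * ⟪δ₀, δ₀⟫ ≤ ⟪α, δ₀⟫ * ⟪α, δ₀⟫ := by nlinarith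
            have hpar : α = (⟪α, δ₀⟫ / ⟪δ₀, δ₀⟫) • δ₀ :=
              parallel_of_sq (R.ne_zero δ₀ hδ₀Φ) hsq
            rcases R.reduced δ₀ hδ₀Φ _ (by rw [← hpar]; exact hαΦ) with ht | ht
            · rw [ht, one_smul] at hpar
              exact hcase hpar
            · have hpos' : 0 < ⟪α, δ₀⟫ / ⟪δ₀, δ₀⟫ :=
                div_pos (lt_of_lt_of_le hαα k1) hδδ
              rw [ht] at hpos'
              norm_num at hpos'
        have hle : Submodule.span ℝ
            ({β} ∪ {x : V | ∃ y : V, R.IsPos x ∧ R.IsPos y ∧ β = x + y}) ≤ U := by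
          rw [Submodule.span_le]
          rintro x (hx1 | ⟨y, hx, hy, hdec⟩)
          · rw [Set.mem_singleton_iff] at hx1
            rw [hx1]
            exact hβU
          · exact hsummand x y hx hy hdec
        exact hle hδUβ

end RootSystemBase


end Aux

/-- For a positive root `α`, let `V_α` be the span of `α` together with all summands
`β, γ` of decompositions `α = β + γ` into two positive roots. Then `V_α` equals the
span of the simple roots `δ` with `δ ≺ α`. -/
theorem span_decomposition_summands_eq {V : Type*} [NormedAddCommGroup V]
    [InnerProductSpace ℝ V] (R : RootSystemBase V) (α : V) (hα : R.IsPos α) :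
    Submodule.span ℝ ({α} ∪ {β : V | ∃ γ : V, R.IsPos β ∧ R.IsPos γ ∧ α = β + γ}) =
      Submodule.span ℝ {δ : V | δ ∈ R.Δ ∧ R.Prec δ α} := by
  classical
  obtain ⟨g, hg⟩ := R.exists_coords
  set f : V →ₗ[ℝ] ℝ := ∑ δ ∈ R.Δ, g δ with hfdef
  have hf : ∀ d ∈ R.Δ, f d = 1 := by
    intro d hd
    rw [hfdef, LinearMap.sum_apply, Finset.sum_eq_single_of_mem d hd]
    · exact (hg d hd).1
    · intro δ hδ hne
      exact (hg δ hδ).2 d hd (Ne.symm hne)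
  apply le_antisymm
  · -- easy inclusion
    rw [Submodule.span_le]
    have main : ∀ x : V, ∀ cx : V → ℝ, (∀ d, 0 ≤ cx d) → x = ∑ d ∈ R.Δ, cx d • d →
        (∀ d ∈ R.Δ, 0 < cx d → R.Prec d α) →
        x ∈ Submodule.span ℝ {δ : V | δ ∈ R.Δ ∧ R.Prec δ α} := by
      intro x cx hcx hrepx hsupp
      rw [hrepx]
      refine Submodule.sum_mem _ fun d hd => ?_
      rcases lt_or_eq_of_le (hcx d) with hpos | hzero
      · exact Submodule.smul_mem _ _ (Submodule.subset_span ⟨hd, hsupp d hd hpos⟩)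
      · rw [← hzero, zero_smul]
        exact Submodule.zero_mem _
    rintro x (hx1 | ⟨γ, hx, hγ, hdec⟩)
    · rw [Set.mem_singleton_iff] at hx1
      obtain ⟨_, c, hc, hrep⟩ := hα
      refine SetLike.mem_coe.mpr (main x c hc (hx1 ▸ hrep) fun d hd hpos => ⟨c, hc, hrep, hpos⟩)
    · obtain ⟨_, cb, hcb, hrb⟩ := hx
      obtain ⟨_, cg, hcg, hrg⟩ := hγ
      refine SetLike.mem_coe.mpr (main x cb hcb hrb fun d hd hpos => ?_)
      refine ⟨fun e => cb e + cg e, fun e => add_nonneg (hcb e) (hcg e), ?_,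
        add_pos_of_pos_of_nonneg hpos (hcg d)⟩
      rw [hdec, hrb, hrg, ← Finset.sum_add_distrib]
      exact Finset.sum_congr rfl fun e _ => (add_smul _ _ _).symm
  · -- hard inclusion
    rw [Submodule.span_le]
    rintro δ ⟨hδΔ, hδprec⟩
    exact SetLike.mem_coe.mpr <| R.key hg hf ((R.Φ.filter (fun z => f z < f α)).card + 1) α hα
      (Nat.lt_succ_self _) δ hδΔ hδprec
end

section
/- Let Φ be a reduced root system with Weyl group W acting on the Euclidean space V, and let w ∈ W be regular (Φ⁺_{w⁻¹} spans V*). Let V^w be the subspace of w-invariant vectors. Then for every α ∈ Φ⁺_{w⁻¹} whose coroot α∨ does not vanish identically on V^w, there exists β ∈ Φ⁺_{w⁻¹}, β ≠ α, such that the restrictions of β∨ and −α∨ to V^w coincide. -/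
open RealInnerProductSpace

namespace RootSystemBase

variable {V : Type*} [NormedAddCommGroup V] [InnerProductSpace ℝ V]

lemma not_isPos_isNeg (R : RootSystemBase V) {γ : V} (h1 : R.IsPos γ) (h2 : R.IsNeg γ) :
    False := by
  obtain ⟨hΦ, c, hc, hγ⟩ := h1
  obtain ⟨-, c', hc', hγ'⟩ := h2
  have hsum : ∑ d ∈ R.Δ, (c d + c' d) • d = 0 := by
    have : ∑ d ∈ R.Δ, (c d + c' d) • d = (∑ d ∈ R.Δ, c d • d) + ∑ d ∈ R.Δ, c' d • d := by
      rw [← Finset.sum_add_distrib]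
      exact Finset.sum_congr rfl fun d _ => add_smul _ _ _
    rw [this, ← hγ]
    have : ∑ d ∈ R.Δ, c' d • d = -γ := by rw [hγ', neg_neg]
    rw [this, add_neg_cancel]
  have hzero : ∀ d ∈ R.Δ, c d + c' d = 0 := by
    have h' : ∑ i : {x // x ∈ R.Δ}, (c i + c' i) • (i : V) = 0 := by
      rw [Finset.sum_coe_sort R.Δ (fun d => (c d + c' d) • d)]; exact hsum
    have := Fintype.linearIndependent_iff.mp R.base_indep (fun i => c i + c' i) h'
    intro d hd; exact this ⟨d, hd⟩
  have hc0 : ∀ d ∈ R.Δ, c d = 0 := fun d hd =>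
    le_antisymm (by nlinarith [hzero d hd, hc d, hc' d]) (hc d)
  have : γ = 0 := by
    rw [hγ]
    exact Finset.sum_eq_zero fun d hd => by rw [hc0 d hd, zero_smul]
  exact R.ne_zero γ hΦ this

lemma neg_mem_s10 (R : RootSystemBase V) {α : V} (hα : α ∈ R.Φ) : -α ∈ R.Φ := by
  have h0 : ⟪α, α⟫ ≠ (0 : ℝ) := inner_self_ne_zero.mpr (R.ne_zero α hα)
  have := R.reflect_mem α hα α hα
  have h2 : 2 * ⟪α, α⟫ / ⟪α, α⟫ = (2 : ℝ) := by field_simp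
  rw [h2] at this
  have h3 : α - (2 : ℝ) • α = -α := by
    rw [two_smul]; abel
  rwa [h3] at this

lemma isPos_neg_of_isNeg (R : RootSystemBase V) {γ : V} (h : R.IsNeg γ) : R.IsPos (-γ) := by
  obtain ⟨hΦ, c, hc, hγ⟩ := h
  exact ⟨R.neg_mem_s10 hΦ, c, hc, by rw [hγ, neg_neg]⟩

lemma isNeg_neg_of_isPos (R : RootSystemBase V) {γ : V} (h : R.IsPos γ) : R.IsNeg (-γ) := by
  obtain ⟨hΦ, c, hc, hγ⟩ := h
  exact ⟨R.neg_mem_s10 hΦ, c, hc, by rw [hγ]⟩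

end RootSystemBase

/-- Let `w` be a regular Weyl group element (the positive roots `α` with `w⁻¹α < 0` span
`V`), and let `V^w` be the space of `w`-invariant vectors. Then for every positive root
`α` with `w⁻¹α < 0` whose coroot does not vanish identically on `V^w`, there exists
another positive root `β ≠ α` with `w⁻¹β < 0` such that the restrictions of `β∨` and
`−α∨` to `V^w` coincide. -/
theorem exists_opposite_coroot_on_invariants {V : Type*} [NormedAddCommGroup V]
    [InnerProductSpace ℝ V] (R : RootSystemBase V) (w : V ≃ₗᵢ[ℝ] V)
    (hw : ∀ α ∈ R.Φ, w α ∈ R.Φ ∧ w.symm α ∈ R.Φ)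
    (hreg : Submodule.span ℝ {α : V | R.IsPos α ∧ R.IsNeg (w.symm α)} = ⊤)
    (α : V) (hα : R.IsPos α) (hαneg : R.IsNeg (w.symm α))
    (hnv : ∃ x : V, w x = x ∧ ⟪α, x⟫ ≠ 0) :
    ∃ β : V, R.IsPos β ∧ R.IsNeg (w.symm β) ∧ β ≠ α ∧
      ∀ x : V, w x = x → 2 * ⟪β, x⟫ / ⟪β, β⟫ = -(2 * ⟪α, x⟫ / ⟪α, α⟫) := by
  classical
  set f : V → V := ⇑w.symm with hf
  -- iterates stay in Φ
  have hiter : ∀ k : ℕ, f^[k] α ∈ R.Φ := by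
    intro k
    induction k with
    | zero => exact hα.1
    | succ n ih => rw [Function.iterate_succ_apply']; exact (hw _ ih).2
  -- inner products with invariant vectors
  have hinv : ∀ x : V, w x = x → ∀ k : ℕ, ⟪f^[k] α, x⟫ = ⟪α, x⟫ := by
    intro x hx k
    have hfx : f x = x := by
      simp only [hf]
      conv_lhs => rw [← hx]
      exact w.symm_apply_apply x
    induction k with
    | zero => rfl
    | succ n ih =>
      rw [Function.iterate_succ_apply']
      calc ⟪f (f^[n] α), x⟫ = ⟪f (f^[n] α), f x⟫ := by rw [hfx]
        _ = ⟪f^[n] α, x⟫ := w.symm.inner_map_map _ _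
        _ = ⟪α, x⟫ := ih
  have hnorm : ∀ k : ℕ, ⟪f^[k] α, f^[k] α⟫ = ⟪α, α⟫ := by
    intro k
    induction k with
    | zero => rfl
    | succ n ih =>
      rw [Function.iterate_succ_apply']
      calc ⟪f (f^[n] α), f (f^[n] α)⟫ = ⟪f^[n] α, f^[n] α⟫ := w.symm.inner_map_map _ _
        _ = ⟪α, α⟫ := ih
  -- periodicity: exists n ≥ 1 with f^[n] α = α
  have hper : ∃ n : ℕ, 0 < n ∧ f^[n] α = α := by
    have hfin : ∀ k : ℕ, f^[k] α ∈ R.Φ := hiter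
    obtain ⟨i, j, hij, hval⟩ := Finite.exists_ne_map_eq_of_infinite
      (fun k : ℕ => (⟨f^[k] α, hiter k⟩ : {x // x ∈ R.Φ}))
    have hval' : f^[i] α = f^[j] α := congrArg Subtype.val hval
    rcases lt_or_gt_of_ne hij with h | h
    · refine ⟨j - i, Nat.sub_pos_of_lt h, ?_⟩
      have : f^[i] (f^[j - i] α) = f^[i] α := by
        rw [← Function.iterate_add_apply, Nat.add_sub_cancel' h.le, hval']
      exact (Function.Injective.iterate w.symm.injective i) this
    · refine ⟨i - j, Nat.sub_pos_of_lt h, ?_⟩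
      have : f^[j] (f^[i - j] α) = f^[j] α := by
        rw [← Function.iterate_add_apply, Nat.add_sub_cancel' h.le, hval'.symm]
      exact (Function.Injective.iterate w.symm.injective j) this
  -- minimal m ≥ 1 with f^[m] α positive
  have hP : ∃ m : ℕ, 0 < m ∧ R.IsPos (f^[m] α) := by
    obtain ⟨n, hn, hfn⟩ := hper
    exact ⟨n, hn, by rw [hfn]; exact hα⟩
  let m := Nat.find hP
  obtain ⟨hm_pos, hm_isPos⟩ : 0 < m ∧ R.IsPos (f^[m] α) := Nat.find_spec hP
  have hm2 : 2 ≤ m := by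
    by_contra h
    have hm1 : m = 1 := by omega
    rw [hm1, Function.iterate_one] at hm_isPos
    exact R.not_isPos_isNeg hm_isPos hαneg
  -- γ = f^[m-1] α is a negative root
  set γ := f^[m - 1] α with hγdef
  have hγΦ : γ ∈ R.Φ := hiter _
  have hγ_not_pos : ¬ R.IsPos γ := by
    intro hp
    rcases eq_or_lt_of_le (show 1 ≤ m - 1 by omega) with h | h
    · rw [hγdef, ← h, Function.iterate_one] at hp
      exact R.not_isPos_isNeg hp hαneg
    · exact Nat.find_min hP (show m - 1 < m by omega) ⟨by omega, hp⟩
  have hγ_neg : R.IsNeg γ := by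
    rcases R.pos_or_neg γ hγΦ with h | h
    · exact absurd ⟨hγΦ, h⟩ hγ_not_pos
    · exact ⟨hγΦ, h⟩
  -- β = -γ
  refine ⟨-γ, R.isPos_neg_of_isNeg hγ_neg, ?_, ?_, ?_⟩
  · have hfm : f γ = f^[m] α := by
      rw [hγdef, ← Function.iterate_succ_apply' f (m - 1) α]
      congr 1
      omega
    have hneg : f (-γ) = -(f^[m] α) := by
      rw [show f (-γ) = -(f γ) from map_neg w.symm γ, hfm]
    rw [show R.IsNeg (w.symm (-γ)) = R.IsNeg (f (-γ)) from rfl, hneg]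
    exact R.isNeg_neg_of_isPos hm_isPos
  · intro hβα
    obtain ⟨x, hx, hax⟩ := hnv
    have h1 : ⟪γ, x⟫ = ⟪α, x⟫ := hinv x hx (m - 1)
    have h2 : ⟪-γ, x⟫ = ⟪α, x⟫ := by rw [hβα]
    rw [inner_neg_left, h1] at h2
    exact hax (by linarith)
  · intro x hx
    have h1 : ⟪-γ, x⟫ = -⟪α, x⟫ := by rw [inner_neg_left, hinv x hx (m - 1)]
    have h2 : ⟪-γ, -γ⟫ = ⟪α, α⟫ := by
      rw [inner_neg_neg]; exact hnorm (m - 1)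
    rw [h1, h2]
    ring
end

section
/- Let Φ be an irreducible reduced root system, ρ half the sum of the positive roots, and α̃ the highest root. Set d_min = ⟨ρ, α̃∨⟩. Then for every positive root β and every subset S ⊂ Φ⁺, the vector Σ_{α ∈ Φ⁺ \ S} α − (d_min − |S|)·β lies in the cone of nonnegative real combinations of positive roots. -/
open RealInnerProductSpace

open scoped Classical

/-- Let `ρ` be half the sum of the positive roots, `α̃` the highest root (i.e. `α̃ − β`
is a nonnegative combination of simple roots for every positive root `β`), and
`d_min = ⟨ρ, α̃∨⟩`. Then for every positive root `β` and every subset `S` of the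
positive roots, `Σ_{α ∈ Φ⁺ \ S} α − (d_min − |S|)·β` is a nonnegative combination of
positive roots. -/
theorem sum_pos_roots_sub_dmin_mem_cone {V : Type*} [NormedAddCommGroup V]
    [InnerProductSpace ℝ V] (R : RootSystemBase V)
    (tα : V) (htα : R.IsPos tα)
    (hhigh : ∀ β : V, R.IsPos β →
      ∃ c : V → ℝ, (∀ d, 0 ≤ c d) ∧ tα - β = ∑ d ∈ R.Δ, c d • d)
    (β : V) (hβ : R.IsPos β) (S : Finset V)
    (hS : S ⊆ R.Φ.filter (fun γ => R.IsPos γ)) :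
    ∃ c : V → ℝ, (∀ γ, 0 ≤ c γ) ∧
      (∑ γ ∈ R.Φ.filter (fun γ => R.IsPos γ) \ S, γ)
          - ((2 * ⟪(2 : ℝ)⁻¹ • ∑ γ ∈ R.Φ.filter (fun γ => R.IsPos γ), γ, tα⟫ / ⟪tα, tα⟫)
              - (S.card : ℝ)) • β
        = ∑ γ ∈ R.Φ.filter (fun γ => R.IsPos γ), c γ • γ := by
    classical
  obtain ⟨htαΦ, htαcombo⟩ := id htα
  have htα0 : tα ≠ 0 := R.ne_zero tα htαΦ
  have hQpos : (0:ℝ) < ⟪tα, tα⟫ :=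
    lt_of_le_of_ne real_inner_self_nonneg (Ne.symm (inner_self_ne_zero.mpr htα0))
  have hQne : ⟪tα, tα⟫ ≠ (0:ℝ) := ne_of_gt hQpos
  -- negation of a root is a root
  have neg_mem : ∀ μ ∈ R.Φ, -μ ∈ R.Φ := by
    intro μ hμ
    have h := R.reflect_mem μ hμ μ hμ
    have hμ0 : μ ≠ 0 := R.ne_zero μ hμ
    have hμQ : ⟪μ, μ⟫ ≠ (0:ℝ) := inner_self_ne_zero.mpr hμ0
    have h2 : 2 * ⟪μ, μ⟫ / ⟪μ, μ⟫ = (2:ℝ) := by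
      rw [mul_div_assoc, div_self hμQ, mul_one]
    rw [h2] at h
    have e : μ - (2:ℝ) • μ = -μ := by module
    rwa [e] at h
  -- a height functional: linear, equal to 1 on each simple root
  obtain ⟨f, hf⟩ : ∃ f : V →ₗ[ℝ] ℝ, ∀ d ∈ R.Δ, f d = 1 := by
    have hind : LinearIndependent ℝ ((↑) : (↑R.Δ : Set V) → V) := R.base_indep
    let b := Module.Basis.extend hind
    refine ⟨b.constr ℝ (fun i => if (i : V) ∈ R.Δ then 1 else 0), ?_⟩
    intro d hd
    have hdmem : d ∈ LinearIndepOn.extend (v := id) hind (Set.subset_univ _) :=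
      LinearIndepOn.subset_extend (v := id) hind _ (by simpa using hd)
    have hb : b ⟨d, hdmem⟩ = d := Module.Basis.extend_apply_self hind ⟨d, hdmem⟩
    conv_lhs => rw [← hb]
    rw [Module.Basis.constr_basis]
    simp [hd]
  have hfS : ∀ (c : V → ℝ), f (∑ d ∈ R.Δ, c d • d) = ∑ d ∈ R.Δ, c d := by
    intro c
    rw [map_sum]
    exact Finset.sum_congr rfl fun d hd => by rw [map_smul, hf d hd, smul_eq_mul, mul_one]
  have hcombo_nonneg : ∀ (c : V → ℝ), (∀ d, 0 ≤ c d) → 0 ≤ f (∑ d ∈ R.Δ, c d • d) := by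
    intro c hc; rw [hfS]; exact Finset.sum_nonneg fun d _ => hc d
  have hcombo_zero : ∀ (c : V → ℝ), (∀ d, 0 ≤ c d) → f (∑ d ∈ R.Δ, c d • d) = 0 →
      (∑ d ∈ R.Δ, c d • d) = 0 := by
    intro c hc h0
    rw [hfS] at h0
    have hz := (Finset.sum_eq_zero_iff_of_nonneg (fun d _ => hc d)).mp h0
    exact Finset.sum_eq_zero fun d hd => by rw [hz d hd, zero_smul]
  have fpos : ∀ γ, R.IsPos γ → 0 < f γ := by
    rintro γ ⟨hγΦ, c, hc, hγeq⟩
    rcases lt_or_eq_of_le (hcombo_nonneg c hc) with h | h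
    · rwa [hγeq]
    · exact absurd (hγeq.trans (hcombo_zero c hc h.symm)) (R.ne_zero _ hγΦ)
  have posOf : ∀ μ ∈ R.Φ, 0 < f μ → R.IsPos μ := by
    intro μ hμ hfμ
    rcases R.pos_or_neg μ hμ with h | ⟨c, hc, hμeq⟩
    · exact ⟨hμ, h⟩
    · exfalso
      have : f μ ≤ 0 := by
        rw [hμeq, map_neg]
        linarith [hcombo_nonneg c hc]
      linarith
  have negOf : ∀ μ ∈ R.Φ, f μ < 0 → R.IsPos (-μ) := by
    intro μ hμ hfμ
    rcases R.pos_or_neg μ hμ with ⟨c, hc, hμeq⟩ | ⟨c, hc, hμeq⟩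
    · exact absurd hfμ (not_lt.mpr (le_of_lt (fpos μ ⟨hμ, c, hc, hμeq⟩)))
    · exact ⟨neg_mem μ hμ, c, hc, by rw [hμeq, neg_neg]⟩
  have fle : ∀ γ, R.IsPos γ → f γ ≤ f tα := by
    intro γ hγ
    obtain ⟨c, hc, hceq⟩ := hhigh γ hγ
    have h := hcombo_nonneg c hc
    rw [← hceq, map_sub] at h
    linarith
  have ftαpos : 0 < f tα := fpos tα htα
  -- the Cartan pairing with tα
  set n : V → ℝ := fun γ => 2 * ⟪γ, tα⟫ / ⟪tα, tα⟫ with hn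
  have hnγ : ∀ γ, n γ = 2 * ⟪γ, tα⟫ / ⟪tα, tα⟫ := fun γ => rfl
  have reflΦ : ∀ γ ∈ R.Φ, γ - n γ • tα ∈ R.Φ := fun γ hγ => R.reflect_mem tα htαΦ γ hγ
  have ntα : n tα = 2 := by
    rw [hnγ, mul_div_assoc, div_self hQne, mul_one]
  have nval : ∀ γ, R.IsPos γ → γ ≠ tα → n γ = 0 ∨ n γ = 1 := by
    intro γ hγ hne
    obtain ⟨m, hm⟩ := R.crystal tα htαΦ γ hγ.1
    have hmn : n γ = (m:ℝ) := hm
    have hfγ : 0 < f γ := fpos γ hγ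
    have hfγle : f γ ≤ f tα := fle γ hγ
    have hμΦ : γ - (m:ℝ) • tα ∈ R.Φ := by rw [← hmn]; exact reflΦ γ hγ.1
    have hfμ : f (γ - (m:ℝ) • tα) = f γ - (m:ℝ) * f tα := by
      rw [map_sub, map_smul, smul_eq_mul]
    have hm0 : 0 ≤ m := by
      by_contra hcon
      push_neg at hcon
      have hmle : (m:ℝ) ≤ -1 := by exact_mod_cast (by omega : m ≤ -1)
      have hpos : 0 < f (γ - (m:ℝ) • tα) := by rw [hfμ]; nlinarith
      have hμpos := posOf _ hμΦ hpos
      obtain ⟨c, hc, hceq⟩ := hhigh _ hμpos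
      have h2 := hcombo_nonneg c hc
      rw [← hceq, map_sub, hfμ] at h2
      nlinarith
    have hm1 : m ≤ 1 := by
      by_contra hcon
      push_neg at hcon
      have hmge : (2:ℝ) ≤ (m:ℝ) := by exact_mod_cast hcon
      have hneg : f (γ - (m:ℝ) • tα) < 0 := by rw [hfμ]; nlinarith
      have hμneg := negOf _ hμΦ hneg
      obtain ⟨c, hc, hceq⟩ := hhigh _ hμneg
      have h2 := hcombo_nonneg c hc
      rw [← hceq, map_sub, map_neg, hfμ] at h2
      have hm2' : m = 2 := by
        by_contra hm3
        have h3 : (3:ℝ) ≤ (m:ℝ) := by exact_mod_cast (by omega : (3:ℤ) ≤ m)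
        nlinarith
      rw [hm2'] at h2
      push_cast at h2
      have hfeq : f γ = f tα := le_antisymm hfγle (by linarith)
      obtain ⟨c', hc', hceq'⟩ := hhigh γ hγ
      have h5 : f (∑ d ∈ R.Δ, c' d • d) = 0 := by
        rw [← hceq', map_sub]; linarith
      have h6 : tα - γ = 0 := by rw [hceq']; exact hcombo_zero c' hc' h5
      exact hne (sub_eq_zero.mp h6).symm
    have : m = 0 ∨ m = 1 := by omega
    rcases this with rfl | rfl
    · left; rw [hmn]; norm_num
    · right; rw [hmn]; norm_num
  -- pairing: if n γ = 1 then tα - γ is a positive root with n = 1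
  have pairmem : ∀ γ, R.IsPos γ → n γ = 1 → R.IsPos (tα - γ) ∧ n (tα - γ) = 1 := by
    intro γ hγ hγ1
    have h1 : γ - (1:ℝ) • tα ∈ R.Φ := by rw [← hγ1]; exact reflΦ γ hγ.1
    have h2 : tα - γ ∈ R.Φ := by
      have h3 := neg_mem _ h1
      have e : -(γ - (1:ℝ) • tα) = tα - γ := by module
      rwa [e] at h3
    obtain ⟨c, hc, hceq⟩ := hhigh γ hγ
    refine ⟨⟨h2, c, hc, hceq⟩, ?_⟩
    have hx : 2 * ⟪γ, tα⟫ = ⟪tα, tα⟫ := by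
      rw [hnγ] at hγ1
      field_simp at hγ1
      linarith
    rw [hnγ, inner_sub_left, div_eq_one_iff_eq hQne]
    linarith
  -- the cone predicate
  set P := R.Φ.filter (fun γ => R.IsPos γ) with hP
  set Cone : V → Prop := fun v => ∃ c : V → ℝ, (∀ γ, 0 ≤ c γ) ∧ v = ∑ γ ∈ P, c γ • γ
    with hCone
  have cone_zero : Cone 0 := ⟨0, fun _ => le_refl _, by simp⟩
  have cone_add : ∀ v w, Cone v → Cone w → Cone (v + w) := by
    rintro v w ⟨c, hc, hv⟩ ⟨c', hc', hw⟩
    refine ⟨c + c', fun γ => add_nonneg (hc γ) (hc' γ), ?_⟩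
    rw [hv, hw, ← Finset.sum_add_distrib]
    exact Finset.sum_congr rfl fun γ _ => by simp [add_smul]
  have cone_smul : ∀ (t : ℝ) v, 0 ≤ t → Cone v → Cone (t • v) := by
    rintro t v ht ⟨c, hc, hv⟩
    refine ⟨fun γ => t * c γ, fun γ => mul_nonneg ht (hc γ), ?_⟩
    rw [hv, Finset.smul_sum]
    exact Finset.sum_congr rfl fun γ _ => (mul_smul t (c γ) γ).symm
  have cone_mem : ∀ γ ∈ P, Cone γ := by
    intro γ₀ h0
    refine ⟨fun γ => if γ = γ₀ then 1 else 0,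
      fun γ => by by_cases h : γ = γ₀ <;> simp [h], ?_⟩
    rw [Finset.sum_eq_single_of_mem γ₀ h0 (fun b _ hb => by simp [hb])]
    simp
  have cone_sum : ∀ (T : Finset V) (g : V → V), (∀ γ ∈ T, Cone (g γ)) →
      Cone (∑ γ ∈ T, g γ) :=
    fun T g h => Finset.sum_induction g Cone cone_add cone_zero h
  have Δsub : ∀ d ∈ R.Δ, d ∈ P := by
    intro d hd
    refine Finset.mem_filter.mpr ⟨R.base_sub hd, R.base_sub hd,
      fun x => if x = d then 1 else 0, fun x => by by_cases h : x = d <;> simp [h], ?_⟩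
    rw [Finset.sum_eq_single_of_mem d hd (fun b _ hb => by simp [hb])]
    simp
  have cone_combo : ∀ c : V → ℝ, (∀ d, 0 ≤ c d) → Cone (∑ d ∈ R.Δ, c d • d) :=
    fun c hc => cone_sum R.Δ (fun d => c d • d)
      (fun d hd => cone_smul _ _ (hc d) (cone_mem d (Δsub d hd)))
  -- rewrite the scalar in the goal
  have hDval : 2 * ⟪(2:ℝ)⁻¹ • ∑ γ ∈ P, γ, tα⟫ / ⟪tα, tα⟫
      = ⟪∑ γ ∈ P, γ, tα⟫ / ⟪tα, tα⟫ := by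
    rw [real_inner_smul_left]; ring
  rw [hDval]
  set d : ℝ := ⟪∑ γ ∈ P, γ, tα⟫ / ⟪tα, tα⟫ with hd
  have htαP : tα ∈ P := Finset.mem_filter.mpr ⟨htαΦ, htα⟩
  have hβP : β ∈ P := Finset.mem_filter.mpr ⟨hβ.1, hβ⟩
  -- d is half the sum of the Cartan pairings
  have hd2 : ∑ γ ∈ P, n γ = 2 * d := by
    rw [hd, sum_inner, Finset.sum_div, Finset.mul_sum]
    exact Finset.sum_congr rfl fun γ _ => by rw [hnγ]; ring
  -- key identity: 2ρ - d • tα is a sum of positive roots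
  have e1 : (∑ γ ∈ P, (γ - (n γ / 2) • tα)) = (∑ γ ∈ P, γ) - d • tα := by
    rw [Finset.sum_sub_distrib, ← Finset.sum_smul, ← Finset.sum_div, hd2]
    congr 2
    ring
  set P' := P.filter (fun γ => ¬ n γ = 1) with hP'
  set C := P'.filter (fun γ => ¬ γ = tα) with hC
  have hsingle : P'.filter (fun γ => γ = tα) = {tα} := by
    ext γ
    simp only [Finset.mem_filter, Finset.mem_singleton]
    constructor
    · rintro ⟨_, h⟩; exact h
    · rintro rfl
      exact ⟨Finset.mem_filter.mpr ⟨htαP, by rw [ntα]; norm_num⟩, rfl⟩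
  have e4 : (∑ γ ∈ P.filter (fun γ => n γ = 1), (γ - (n γ / 2) • tα)) = 0 := by
    refine Finset.sum_involution (fun γ _ => tα - γ) ?_ ?_ ?_ ?_
    · intro γ hγ
      obtain ⟨hγP, hγ1⟩ := Finset.mem_filter.mp hγ
      have hpair := pairmem γ (Finset.mem_filter.mp hγP).2 hγ1
      rw [hγ1, hpair.2]
      module
    · intro γ hγ _
      obtain ⟨hγP, hγ1⟩ := Finset.mem_filter.mp hγ
      intro heq
      have h2 : (2:ℝ) • γ ∈ R.Φ := by
        have : (2:ℝ) • γ = tα := by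
          have h := heq
          rw [sub_eq_iff_eq_add] at h
          rw [h]; module
        rw [this]; exact htαΦ
      rcases R.reduced γ (Finset.mem_filter.mp hγP).1 2 h2 with h | h <;> norm_num at h
    · intro γ hγ
      obtain ⟨hγP, hγ1⟩ := Finset.mem_filter.mp hγ
      have hpair := pairmem γ (Finset.mem_filter.mp hγP).2 hγ1
      exact Finset.mem_filter.mpr
        ⟨Finset.mem_filter.mpr ⟨hpair.1.1, hpair.1⟩, hpair.2⟩
    · intro γ hγ
      simp
  have e5 : ∀ γ ∈ C, (γ - (n γ / 2) • tα) = γ := by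
    intro γ hγ
    obtain ⟨hγP', hγtα⟩ := Finset.mem_filter.mp hγ
    obtain ⟨hγP, hγ1⟩ := Finset.mem_filter.mp hγP'
    rcases nval γ (Finset.mem_filter.mp hγP).2 hγtα with h | h
    · rw [h]; norm_num
    · exact absurd h hγ1
  have keyCone : Cone ((∑ γ ∈ P, γ) - d • tα) := by
    rw [← e1, ← Finset.sum_filter_add_sum_filter_not P (fun γ => n γ = 1)
      (fun γ => γ - (n γ / 2) • tα), e4, zero_add,
      ← Finset.sum_filter_add_sum_filter_not P' (fun γ => γ = tα)
      (fun γ => γ - (n γ / 2) • tα), hsingle, Finset.sum_singleton, ntα,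
      Finset.sum_congr rfl e5]
    have h0 : tα - ((2:ℝ)/2) • tα = 0 := by norm_num
    rw [h0, zero_add]
    refine cone_sum C (fun γ => γ) (fun γ hγ => cone_mem γ ?_)
    exact Finset.mem_filter.mp ((Finset.mem_filter.mp hγ).1) |>.1
  -- now put everything together
  show Cone ((∑ γ ∈ P \ S, γ) - (d - (S.card:ℝ)) • β)
  rcases le_total d (S.card : ℝ) with hcase | hcase
  · have hv : (∑ γ ∈ P \ S, γ) - (d - (S.card:ℝ)) • β
        = (∑ γ ∈ P \ S, γ) + ((S.card:ℝ) - d) • β := by module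
    rw [hv]
    exact cone_add _ _
      (cone_sum _ (fun γ => γ) (fun γ hγ => cone_mem γ (Finset.mem_sdiff.mp hγ).1))
      (cone_smul _ _ (by linarith) (cone_mem β hβP))
  · have hsum : (∑ γ ∈ P \ S, γ) + (∑ γ ∈ S, γ) = ∑ γ ∈ P, γ := Finset.sum_sdiff hS
    have hStα : (∑ γ ∈ S, (tα - γ)) = (S.card:ℝ) • tα - ∑ γ ∈ S, γ := by
      rw [Finset.sum_sub_distrib, Finset.sum_const]
      congr 1
      exact (Nat.cast_smul_eq_nsmul ℝ _ _).symm
    have hv : (∑ γ ∈ P \ S, γ) - (d - (S.card:ℝ)) • β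
        = ((∑ γ ∈ P, γ) - d • tα)
          + ((∑ γ ∈ S, (tα - γ)) + (d - (S.card:ℝ)) • (tα - β)) := by
      rw [hStα, ← hsum]
      module
    rw [hv]
    refine cone_add _ _ keyCone (cone_add _ _ ?_ (cone_smul _ _ (by linarith) ?_))
    · refine cone_sum S _ (fun γ hγ => ?_)
      obtain ⟨c, hc, hceq⟩ := hhigh γ (Finset.mem_filter.mp (hS hγ)).2
      rw [hceq]; exact cone_combo c hc
    · obtain ⟨c, hc, hceq⟩ := hhigh β hβ
      rw [hceq]; exact cone_combo c hc
end

section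
/- In the root system A_{n−1} realized as {e_i − e_j : i ≠ j} ⊂ ℝⁿ with positive roots {e_i − e_j : i < j}: for any subset I ⊂ {1,…,n} with ∅ ≠ I ≠ {1,…,n}, suppose there exist j₁ < i < j₂ with j₁, j₂ ∉ I and i ∈ I (or j₁, j₂ ∈ I and i ∉ I). Then there exists an injection ι from the set Φ⁺_i = {e_k − e_i : k < i} ∪ {e_i − e_j : i < j} into the set Φ⁺_{¬M} = {e_a − e_b : a < b, exactly one of a, b lies in I}, such that ι(α) − α is a nonnegative combination of positive roots for every α. -/
/-- the standard basis vector `e_i` of `ℝⁿ` -/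
noncomputable def stdVec (n : ℕ) (i : Fin n) : Fin n → ℝ := Pi.single i 1

/-- the set `Φ⁺_i` of positive roots of `A_{n-1}` involving the index `i` -/
def PhiI (n : ℕ) (i : Fin n) : Set (Fin n → ℝ) :=
  {v | (∃ k, k < i ∧ v = stdVec n k - stdVec n i) ∨ (∃ j, i < j ∧ v = stdVec n i - stdVec n j)}

/-- the set `Φ⁺_{¬M}` of positive roots `e_a − e_b` with exactly one of `a, b` in `I` -/
def PhiNotM (n : ℕ) (I : Finset (Fin n)) : Set (Fin n → ℝ) :=
  {v | ∃ a b : Fin n, a < b ∧ ((a ∈ I ∧ b ∉ I) ∨ (a ∉ I ∧ b ∈ I)) ∧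
        v = stdVec n a - stdVec n b}

/-- `v` is a nonnegative combination of the positive roots `e_a − e_b`, `a < b`. -/
def InPosCone (n : ℕ) (v : Fin n → ℝ) : Prop :=
  ∃ c : Fin n × Fin n → ℝ, (∀ p, 0 ≤ c p) ∧
    v = ∑ p : Fin n × Fin n, (if p.1 < p.2 then c p else 0) • (stdVec n p.1 - stdVec n p.2)

lemma stdVec_apply (n : ℕ) (a b : Fin n) : stdVec n a b = if b = a then 1 else 0 := by
  simp [stdVec, Pi.single_apply]

lemma stdVec_sub_inj {n : ℕ} {a b c d : Fin n} (hab : a ≠ b) (hcd : c ≠ d)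
    (h : stdVec n a - stdVec n b = stdVec n c - stdVec n d) : a = c ∧ b = d := by
  have ha := congrFun h a
  have hac : a = c := by
    by_contra hac
    by_cases had : a = d
    · subst had
      simp only [Pi.sub_apply, stdVec_apply, if_pos rfl, if_neg hab, if_neg hac] at ha
      norm_num at ha
    · simp only [Pi.sub_apply, stdVec_apply, if_pos rfl, if_neg hab, if_neg hac, if_neg had] at ha
      norm_num at ha
  subst hac
  refine ⟨rfl, ?_⟩
  have hb := congrFun h b
  by_contra hbd
  simp only [Pi.sub_apply, stdVec_apply, if_pos rfl, if_neg (Ne.symm hab), if_neg hbd] at hb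
  norm_num at hb

lemma inPosCone_zero (n : ℕ) : InPosCone n 0 := by
  refine ⟨0, fun _ => le_refl 0, ?_⟩
  simp

lemma inPosCone_single {n : ℕ} {a b : Fin n} (hab : a < b) :
    InPosCone n (stdVec n a - stdVec n b) := by
  refine ⟨fun p => if p = (a, b) then 1 else 0, fun p => by by_cases hp : p = (a, b) <;> simp [hp], ?_⟩
  rw [Fintype.sum_eq_single (a, b)]
  · simp [hab]
  · intro p hp
    simp [hp]

/-- In the root system `A_{n−1}`: if there exist `j₁ < i < j₂` with `j₁, j₂ ∉ I`, `i ∈ I`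
(or `j₁, j₂ ∈ I`, `i ∉ I`), then there is an injection `ι : Φ⁺_i → Φ⁺_{¬M}` with
`α ≤ ι(α)` for all `α`, i.e. `ι(α) − α` is a nonnegative combination of positive roots. -/
theorem exists_injection_PhiI_le_PhiNotM (n : ℕ) (I : Finset (Fin n))
    (hne : I.Nonempty) (hproper : I ≠ Finset.univ) (i : Fin n)
    (h : ∃ j₁ j₂ : Fin n, j₁ < i ∧ i < j₂ ∧
        ((j₁ ∉ I ∧ j₂ ∉ I ∧ i ∈ I) ∨ (j₁ ∈ I ∧ j₂ ∈ I ∧ i ∉ I))) :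
    ∃ ι : (Fin n → ℝ) → (Fin n → ℝ),
      Set.InjOn ι (PhiI n i) ∧ Set.MapsTo ι (PhiI n i) (PhiNotM n I) ∧
      ∀ α ∈ PhiI n i, InPosCone n (ι α - α) := by
  classical
  obtain ⟨j₁, j₂, hj1i, hij2, hcase⟩ := h
  have hj1 : ¬(j₁ ∈ I ↔ i ∈ I) := by rcases hcase with ⟨h1, h2, h3⟩ | ⟨h1, h2, h3⟩ <;> tauto
  have hj2 : ¬(j₂ ∈ I ↔ i ∈ I) := by rcases hcase with ⟨h1, h2, h3⟩ | ⟨h1, h2, h3⟩ <;> tauto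
  set ι : (Fin n → ℝ) → (Fin n → ℝ) := fun α =>
    if h1 : ∃ k, k < i ∧ α = stdVec n k - stdVec n i then
      if h1.choose ∈ I ↔ i ∈ I then stdVec n h1.choose - stdVec n j₂ else α
    else if h2 : ∃ j, i < j ∧ α = stdVec n i - stdVec n j then
      if h2.choose ∈ I ↔ i ∈ I then stdVec n j₁ - stdVec n h2.choose else α
    else α with hιdef
  have key1 : ∀ k : Fin n, k < i →
      ι (stdVec n k - stdVec n i) =
        if k ∈ I ↔ i ∈ I then stdVec n k - stdVec n j₂ else stdVec n k - stdVec n i := by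
    intro k hk
    have hex : ∃ k', k' < i ∧ stdVec n k - stdVec n i = stdVec n k' - stdVec n i := ⟨k, hk, rfl⟩
    have hch : hex.choose = k := by
      have hs := hex.choose_spec
      exact (stdVec_sub_inj (ne_of_lt hs.1) (ne_of_lt hk) hs.2.symm).1
    rw [hιdef]
    simp only [dif_pos hex, hch]
  have key2 : ∀ j : Fin n, i < j →
      ι (stdVec n i - stdVec n j) =
        if j ∈ I ↔ i ∈ I then stdVec n j₁ - stdVec n j else stdVec n i - stdVec n j := by
    intro j hj
    have hnex : ¬∃ k, k < i ∧ stdVec n i - stdVec n j = stdVec n k - stdVec n i := by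
      rintro ⟨k, hk, he⟩
      have hik := (stdVec_sub_inj (ne_of_lt hj) (ne_of_lt hk) he).1
      exact absurd hk (by rw [← hik]; exact lt_irrefl i)
    have hex : ∃ j', i < j' ∧ stdVec n i - stdVec n j = stdVec n i - stdVec n j' := ⟨j, hj, rfl⟩
    have hch : hex.choose = j := by
      have hs := hex.choose_spec
      exact (stdVec_sub_inj (ne_of_lt hs.1) (ne_of_lt hj) hs.2.symm).2
    rw [hιdef]
    simp only [dif_neg hnex, dif_pos hex, hch]
  refine ⟨ι, ?_, ?_, ?_⟩
  · -- InjOn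
    intro α hα β hβ he
    simp only [PhiI, Set.mem_setOf_eq] at hα hβ
    rcases hα with ⟨k, hk, rfl⟩ | ⟨j, hj, rfl⟩ <;>
      rcases hβ with ⟨k', hk', rfl⟩ | ⟨j', hj', rfl⟩
    · rw [key1 k hk, key1 k' hk'] at he
      split_ifs at he with h1 h2 h2
      · rw [(stdVec_sub_inj (ne_of_lt (hk.trans hij2)) (ne_of_lt (hk'.trans hij2)) he).1]
      · exact absurd (stdVec_sub_inj (ne_of_lt (hk.trans hij2)) (ne_of_lt hk') he).2
          (Ne.symm (ne_of_lt hij2))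
      · exact absurd (stdVec_sub_inj (ne_of_lt hk) (ne_of_lt (hk'.trans hij2)) he).2
          (ne_of_lt hij2)
      · rw [(stdVec_sub_inj (ne_of_lt hk) (ne_of_lt hk') he).1]
    · rw [key1 k hk, key2 j' hj'] at he
      split_ifs at he with h1 h2 h2
      · have := (stdVec_sub_inj (ne_of_lt (hk.trans hij2)) (ne_of_lt (hj1i.trans hj')) he).1
        rw [this] at h1; exact absurd h1 hj1
      · exact absurd (stdVec_sub_inj (ne_of_lt (hk.trans hij2)) (ne_of_lt hj') he).1
          (ne_of_lt hk)
      · exact absurd (stdVec_sub_inj (ne_of_lt hk) (ne_of_lt (hj1i.trans hj')) he).2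
          (ne_of_lt hj')
      · exact absurd (stdVec_sub_inj (ne_of_lt hk) (ne_of_lt hj') he).1 (ne_of_lt hk)
    · rw [key2 j hj, key1 k' hk'] at he
      split_ifs at he with h1 h2 h2
      · have := (stdVec_sub_inj (ne_of_lt (hj1i.trans hj)) (ne_of_lt (hk'.trans hij2)) he).1
        rw [← this] at h2; exact absurd h2 hj1
      · exact absurd (stdVec_sub_inj (ne_of_lt (hj1i.trans hj)) (ne_of_lt hk') he).2
          (Ne.symm (ne_of_lt hj))
      · exact absurd (stdVec_sub_inj (ne_of_lt hj) (ne_of_lt (hk'.trans hij2)) he).1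
          (Ne.symm (ne_of_lt hk'))
      · exact absurd (stdVec_sub_inj (ne_of_lt hj) (ne_of_lt hk') he).1
          (Ne.symm (ne_of_lt hk'))
    · rw [key2 j hj, key2 j' hj'] at he
      split_ifs at he with h1 h2 h2
      · rw [(stdVec_sub_inj (ne_of_lt (hj1i.trans hj)) (ne_of_lt (hj1i.trans hj')) he).2]
      · exact absurd (stdVec_sub_inj (ne_of_lt (hj1i.trans hj)) (ne_of_lt hj') he).1
          (ne_of_lt hj1i)
      · exact absurd (stdVec_sub_inj (ne_of_lt hj) (ne_of_lt (hj1i.trans hj')) he).1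
          (Ne.symm (ne_of_lt hj1i))
      · rw [(stdVec_sub_inj (ne_of_lt hj) (ne_of_lt hj') he).2]
  · -- MapsTo
    intro α hα
    simp only [PhiI, Set.mem_setOf_eq] at hα
    simp only [PhiNotM, Set.mem_setOf_eq]
    rcases hα with ⟨k, hk, rfl⟩ | ⟨j, hj, rfl⟩
    · rw [key1 k hk]
      by_cases hkI : k ∈ I ↔ i ∈ I
      · rw [if_pos hkI]
        exact ⟨k, j₂, hk.trans hij2, by tauto, rfl⟩
      · rw [if_neg hkI]
        exact ⟨k, i, hk, by tauto, rfl⟩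
    · rw [key2 j hj]
      by_cases hjI : j ∈ I ↔ i ∈ I
      · rw [if_pos hjI]
        exact ⟨j₁, j, hj1i.trans hj, by tauto, rfl⟩
      · rw [if_neg hjI]
        exact ⟨i, j, hj, by tauto, rfl⟩
  · -- InPosCone
    intro α hα
    simp only [PhiI, Set.mem_setOf_eq] at hα
    rcases hα with ⟨k, hk, rfl⟩ | ⟨j, hj, rfl⟩
    · rw [key1 k hk]
      by_cases hkI : k ∈ I ↔ i ∈ I
      · rw [if_pos hkI,
          show stdVec n k - stdVec n j₂ - (stdVec n k - stdVec n i)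
            = stdVec n i - stdVec n j₂ from by abel]
        exact inPosCone_single hij2
      · rw [if_neg hkI, sub_self]
        exact inPosCone_zero n
    · rw [key2 j hj]
      by_cases hjI : j ∈ I ↔ i ∈ I
      · rw [if_pos hjI,
          show stdVec n j₁ - stdVec n j - (stdVec n i - stdVec n j)
            = stdVec n j₁ - stdVec n i from by abel]
        exact inPosCone_single hj1i
      · rw [if_neg hjI, sub_self]
        exact inPosCone_zero n
end

section
/- Let Φ be of type Dₙ with n ≥ 5, with simple roots α₁,…,αₙ in Bourbaki numbering and λ in the closure of the positive Weyl chamber. Set x_η = λ_{n−1} + η λ_n for η ∈ {±1} and z_i = 1 + λ_i − λ_{n−1} for 1 ≤ i ≤ n−2. Then for every sign vector ε ∈ {±1}^{n} with ε_n = +1, letting N₁ = #{i ≤ n−2 : ε_i ≠ ε_{n−1}} and N₂ = #{(i,j) : i < j ≤ n−2, ε_i = ε_j}, if N₂ ≥ max(N₁, 1), then ∏_{i<j≤n}(1 + λ_i + ε_i ε_j λ_j) ≥ (1+x₁)(1+x₋₁)·∏_{i≤n−2} z_i (z_i + x₁ + x₋₁). -/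
open scoped Classical

open Finset


private lemma Dn_key1 {a c L : ℝ} (hc : -a ≤ c) (hL : a ≤ L) :
    (1 + a - c) * (1 + L + a) ≤ (1 + 2 * a) * (1 + L - c) := by
  nlinarith [mul_nonneg (by linarith : (0:ℝ) ≤ a + c) (by linarith : (0:ℝ) ≤ L - a)]

private lemma Dn_key2 {a c L : ℝ} (ha : 0 ≤ a) (hc' : c ≤ a) (hL : a ≤ L) :
    (1 + L + a) ≤ (1 + 2 * a) * (1 + L - c) := by
  nlinarith [mul_nonneg ha (by linarith : (0:ℝ) ≤ L - c)]

set_option maxRecDepth 40000 in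
set_option maxHeartbeats 1000000 in
private lemma Dn_aux (n : ℕ) (hn : 5 ≤ n) (lam ε : Fin n → ℝ) (m l : Fin n)
    (hm : (m : ℕ) = n - 2) (hl : (l : ℕ) = n - 1)
    (hdom : ∀ i j : Fin n, i ≤ j → (j : ℕ) < n - 1 → lam j ≤ lam i)
    (hlast : |lam l| ≤ lam m)
    (hε : ∀ i, ε i = 1 ∨ ε i = -1) (hεn : ε l = 1)
    (hN : max ((Finset.univ.filter
          (fun i : Fin n => (i : ℕ) < n - 2 ∧ ε i ≠ ε m)).card) 1
        ≤ (Finset.univ.filter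
          (fun p : Fin n × Fin n => p.1 < p.2 ∧ (p.2 : ℕ) < n - 2 ∧
            ε p.1 = ε p.2)).card) :
    (1 + (lam m + lam l)) * (1 + (lam m - lam l)) *
      ∏ i ∈ Finset.univ.filter (fun i : Fin n => (i : ℕ) < n - 2),
        ((1 + lam i - lam m) *
          ((1 + lam i - lam m) + (lam m + lam l) + (lam m - lam l)))
    ≤ ∏ p ∈ Finset.univ.filter (fun p : Fin n × Fin n => p.1 < p.2),
        (1 + lam p.1 + ε p.1 * ε p.2 * lam p.2) := by
  have ha0 : 0 ≤ lam m := (abs_nonneg _).trans hlast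
  have hb := abs_le.mp hlast
  have hεm2 : ε m * ε m = 1 := by rcases hε m with h | h <;> rw [h] <;> norm_num
  have hc1 : -lam m ≤ ε m * lam l := by
    rcases hε m with h | h <;> rw [h] <;> linarith [hb.1, hb.2]
  have hc2 : ε m * lam l ≤ lam m := by
    rcases hε m with h | h <;> rw [h] <;> linarith [hb.1, hb.2]
  have hIlam : ∀ i : Fin n, (i : ℕ) < n - 2 → lam m ≤ lam i := fun i hi =>
    hdom i m (by rw [Fin.le_def]; omega) (by omega)
  -- notation
  set I : Finset (Fin n) := univ.filter (fun i : Fin n => (i : ℕ) < n - 2) with hI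
  have hmemI : ∀ i ∈ I, (i : ℕ) < n - 2 := fun i hi => (mem_filter.mp hi).2
  -- product decomposition
  have hPsplit : (univ.filter fun p : Fin n × Fin n => p.1 < p.2)
      = ((univ.filter fun p : Fin n × Fin n => p.1 < p.2 ∧ (p.2:ℕ) < n - 2)
        ∪ (univ.filter fun p : Fin n × Fin n => p.1 < p.2 ∧ (p.2:ℕ) = n - 2))
        ∪ ((univ.filter fun p : Fin n × Fin n => (p.1:ℕ) < n - 2 ∧ (p.2:ℕ) = n - 1)
        ∪ {(m, l)}) := by
    ext ⟨p1, p2⟩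
    have h1 := p1.isLt; have h2 := p2.isLt
    simp only [mem_filter, mem_union, mem_singleton, mem_univ, true_and, Fin.lt_def,
      Prod.mk.injEq, Fin.ext_iff]
    omega
  have hd1 : Disjoint (univ.filter fun p : Fin n × Fin n => p.1 < p.2 ∧ (p.2:ℕ) < n - 2)
      (univ.filter fun p : Fin n × Fin n => p.1 < p.2 ∧ (p.2:ℕ) = n - 2) := by
    rw [Finset.disjoint_left]; rintro ⟨p1, p2⟩ hp hq
    simp only [mem_filter, mem_univ, true_and, Fin.lt_def] at hp hq; omega
  have hd2 : Disjoint (univ.filter fun p : Fin n × Fin n => (p.1:ℕ) < n - 2 ∧ (p.2:ℕ) = n - 1)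
      ({(m, l)} : Finset (Fin n × Fin n)) := by
    rw [Finset.disjoint_left]; rintro ⟨p1, p2⟩ hp hq
    simp only [mem_filter, mem_singleton, mem_univ, true_and, Prod.mk.injEq,
      Fin.ext_iff] at hp hq; omega
  have hd3 : Disjoint ((univ.filter fun p : Fin n × Fin n => p.1 < p.2 ∧ (p.2:ℕ) < n - 2)
        ∪ (univ.filter fun p : Fin n × Fin n => p.1 < p.2 ∧ (p.2:ℕ) = n - 2))
      ((univ.filter fun p : Fin n × Fin n => (p.1:ℕ) < n - 2 ∧ (p.2:ℕ) = n - 1)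
        ∪ {(m, l)}) := by
    rw [Finset.disjoint_left]; rintro ⟨p1, p2⟩ hp hq
    simp only [mem_filter, mem_union, mem_singleton, mem_univ, true_and, Fin.lt_def,
      Prod.mk.injEq, Fin.ext_iff] at hp hq; omega
  have hdec : ∏ p ∈ univ.filter (fun p : Fin n × Fin n => p.1 < p.2),
        (1 + lam p.1 + ε p.1 * ε p.2 * lam p.2)
      = (∏ p ∈ univ.filter (fun p : Fin n × Fin n => p.1 < p.2 ∧ (p.2:ℕ) < n - 2),
          (1 + lam p.1 + ε p.1 * ε p.2 * lam p.2))
        * (∏ p ∈ univ.filter (fun p : Fin n × Fin n => p.1 < p.2 ∧ (p.2:ℕ) = n - 2),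
          (1 + lam p.1 + ε p.1 * ε p.2 * lam p.2))
        * ((∏ p ∈ univ.filter (fun p : Fin n × Fin n => (p.1:ℕ) < n - 2 ∧ (p.2:ℕ) = n - 1),
          (1 + lam p.1 + ε p.1 * ε p.2 * lam p.2))
        * (1 + lam m + ε m * ε l * lam l)) := by
    rw [hPsplit, prod_union hd3, prod_union hd1, prod_union hd2, prod_singleton, mul_assoc]
  have hBm : ∏ p ∈ univ.filter (fun p : Fin n × Fin n => p.1 < p.2 ∧ (p.2:ℕ) = n - 2),
        (1 + lam p.1 + ε p.1 * ε p.2 * lam p.2)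
      = ∏ i ∈ I, (1 + lam i + ε i * ε m * lam m) := by
    refine Finset.prod_nbij' (fun p => p.1) (fun i => (i, m)) ?_ ?_ ?_ ?_ ?_
    · rintro ⟨p1, p2⟩ hp
      simp only [hI, mem_filter, mem_univ, true_and, Fin.lt_def] at hp ⊢; omega
    · intro i hi
      simp only [hI, mem_filter, mem_univ, true_and, Fin.lt_def] at hi ⊢; omega
    · rintro ⟨p1, p2⟩ hp
      simp only [mem_filter, mem_univ, true_and, Fin.lt_def] at hp
      dsimp only
      have hk : m = p2 := Fin.ext (by omega)
      rw [hk]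
    · intro i hi; rfl
    · rintro ⟨p1, p2⟩ hp
      simp only [mem_filter, mem_univ, true_and, Fin.lt_def] at hp
      have hk : p2 = m := Fin.ext (by omega)
      rw [hk]
  have hBl : ∏ p ∈ univ.filter (fun p : Fin n × Fin n => (p.1:ℕ) < n - 2 ∧ (p.2:ℕ) = n - 1),
        (1 + lam p.1 + ε p.1 * ε p.2 * lam p.2)
      = ∏ i ∈ I, (1 + lam i + ε i * lam l) := by
    refine Finset.prod_nbij' (fun p => p.1) (fun i => (i, l)) ?_ ?_ ?_ ?_ ?_
    · rintro ⟨p1, p2⟩ hp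
      simp only [hI, mem_filter, mem_univ, true_and] at hp ⊢; omega
    · intro i hi
      simp only [hI, mem_filter, mem_univ, true_and] at hi ⊢; omega
    · rintro ⟨p1, p2⟩ hp
      simp only [mem_filter, mem_univ, true_and] at hp
      dsimp only
      have hk : l = p2 := Fin.ext (by omega)
      rw [hk]
    · intro i hi; rfl
    · rintro ⟨p1, p2⟩ hp
      simp only [mem_filter, mem_univ, true_and] at hp
      have hk : p2 = l := Fin.ext (by omega)
      rw [hk, hεn]
      ring
  have hRHS : ∏ p ∈ univ.filter (fun p : Fin n × Fin n => p.1 < p.2),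
        (1 + lam p.1 + ε p.1 * ε p.2 * lam p.2)
      = (∏ p ∈ univ.filter (fun p : Fin n × Fin n => p.1 < p.2 ∧ (p.2:ℕ) < n - 2),
          (1 + lam p.1 + ε p.1 * ε p.2 * lam p.2))
        * ((∏ i ∈ I, ((1 + lam i + ε i * ε m * lam m) * (1 + lam i + ε i * lam l)))
        * (1 + lam m + ε m * lam l)) := by
    rw [hdec, hBm, hBl, hεn, prod_mul_distrib]
    ring
  rw [hRHS]
  -- rewrite LHS
  have hz : ∏ i ∈ I, ((1 + lam i - lam m) *
        ((1 + lam i - lam m) + (lam m + lam l) + (lam m - lam l)))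
      = ∏ i ∈ I, ((1 + lam i - lam m) * (1 + lam i + lam m)) :=
    prod_congr rfl (fun i _ => by ring)
  have hLHS : (1 + (lam m + lam l)) * (1 + (lam m - lam l)) *
        ∏ i ∈ I, ((1 + lam i - lam m) *
          ((1 + lam i - lam m) + (lam m + lam l) + (lam m - lam l)))
      = (1 + lam m + ε m * lam l) * ((1 + lam m - ε m * lam l) *
        ∏ i ∈ I, ((1 + lam i - lam m) * (1 + lam i + lam m))) := by
    rw [hz]; rcases hε m with h | h <;> rw [h] <;> ring
  rw [hLHS]
  -- abbreviations for the pieces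
  set D : ℝ := ∏ p ∈ univ.filter (fun p : Fin n × Fin n => p.1 < p.2 ∧ (p.2:ℕ) < n - 2),
      (1 + lam p.1 + ε p.1 * ε p.2 * lam p.2) with hD_def
  set G : ℝ := ∏ i ∈ I, ((1 + lam i + ε i * ε m * lam m) * (1 + lam i + ε i * lam l)) with hG_def
  set T : Finset (Fin n × Fin n) := univ.filter
      (fun p : Fin n × Fin n => p.1 < p.2 ∧ (p.2 : ℕ) < n - 2 ∧ ε p.1 = ε p.2) with hT_def
  set S : Finset (Fin n) := I.filter (fun i => ¬ ε i = ε m) with hS_def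
  -- N-count hypothesis in terms of S, T
  have hSeq : univ.filter (fun i : Fin n => (i : ℕ) < n - 2 ∧ ε i ≠ ε m) = S := by
    ext i
    simp only [hS_def, hI, mem_filter, mem_univ, true_and, ne_eq]
  have hN' : max S.card 1 ≤ T.card := by rw [← hSeq]; exact hN
  -- bound D from below
  have hTeq : (univ.filter (fun p : Fin n × Fin n => p.1 < p.2 ∧ (p.2:ℕ) < n - 2)).filter
      (fun p => ε p.1 = ε p.2) = T := by
    ext p
    simp only [hT_def, mem_filter, mem_univ, true_and, and_assoc]
  have hD : (1 + 2 * lam m) ^ T.card ≤ D := by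
    have hd := prod_filter_mul_prod_filter_not
      (univ.filter (fun p : Fin n × Fin n => p.1 < p.2 ∧ (p.2:ℕ) < n - 2))
      (fun p => ε p.1 = ε p.2) (fun p => 1 + lam p.1 + ε p.1 * ε p.2 * lam p.2)
    rw [hTeq] at hd
    have h1 : (1 + 2 * lam m) ^ T.card ≤ ∏ p ∈ T, (1 + lam p.1 + ε p.1 * ε p.2 * lam p.2) := by
      rw [← prod_const]
      refine prod_le_prod (fun p _ => by linarith) ?_
      intro p hp
      rw [hT_def, mem_filter] at hp
      obtain ⟨-, hplt, hp2, hpe⟩ := hp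
      have he : ε p.1 * ε p.2 = 1 := by rw [hpe]; rcases hε p.2 with h | h <;> rw [h] <;> norm_num
      have hp1 : (p.1 : ℕ) < n - 2 := by rw [Fin.lt_def] at hplt; omega
      rw [he]
      have := hIlam p.1 hp1
      have := hIlam p.2 hp2
      nlinarith
    have h2 : (1 : ℝ) ≤ ∏ p ∈ (univ.filter
          (fun p : Fin n × Fin n => p.1 < p.2 ∧ (p.2:ℕ) < n - 2)).filter
          (fun p => ¬ ε p.1 = ε p.2), (1 + lam p.1 + ε p.1 * ε p.2 * lam p.2) := by
      refine le_trans (le_of_eq prod_const_one.symm) (prod_le_prod (fun p _ => zero_le_one) ?_)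
      intro p hp
      rw [mem_filter, mem_filter] at hp
      obtain ⟨⟨-, hplt, hp2⟩, hpe⟩ := hp
      have he : ε p.1 * ε p.2 = -1 := by
        rcases hε p.1 with h1 | h1 <;> rcases hε p.2 with h2 | h2
        · exact absurd (h1.trans h2.symm) hpe
        · rw [h1, h2]; norm_num
        · rw [h1, h2]; norm_num
        · exact absurd (h1.trans h2.symm) hpe
      rw [he]
      have hle : lam p.2 ≤ lam p.1 := hdom p.1 p.2 (le_of_lt hplt) (by omega)
      nlinarith
    calc (1 + 2 * lam m) ^ T.card
        = (1 + 2 * lam m) ^ T.card * 1 := (mul_one _).symm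
      _ ≤ (∏ p ∈ T, (1 + lam p.1 + ε p.1 * ε p.2 * lam p.2)) *
            ∏ p ∈ (univ.filter
              (fun p : Fin n × Fin n => p.1 < p.2 ∧ (p.2:ℕ) < n - 2)).filter
              (fun p => ¬ ε p.1 = ε p.2), (1 + lam p.1 + ε p.1 * ε p.2 * lam p.2) := by
          refine mul_le_mul h1 h2 zero_le_one ?_
          exact le_trans (pow_nonneg (by linarith) _) h1
      _ = D := hd
  -- bound G from below
  have hmemS : ∀ i ∈ S, (i : ℕ) < n - 2 := fun i hi =>
    hmemI i (mem_filter.mp hi).1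
  have hG : (∏ i ∈ I.filter (fun i => ε i = ε m),
        ((1 + lam i - lam m) * (1 + lam i + lam m)))
      * (∏ i ∈ S, ((1 + lam i - lam m) * (1 + lam i - ε m * lam l))) ≤ G := by
    rw [hG_def, ← prod_filter_mul_prod_filter_not I (fun i => ε i = ε m)]
    have hpart1 : ∏ i ∈ I.filter (fun i => ε i = ε m),
          ((1 + lam i - lam m) * (1 + lam i + lam m))
        ≤ ∏ i ∈ I.filter (fun i => ε i = ε m),
          ((1 + lam i + ε i * ε m * lam m) * (1 + lam i + ε i * lam l)) := by
      refine prod_le_prod ?_ ?_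
      · intro i hi
        have hi2 := hmemI i (mem_filter.mp hi).1
        have := hIlam i hi2
        apply mul_nonneg <;> linarith
      · intro i hi
        obtain ⟨hiI, hie⟩ := mem_filter.mp hi
        have hi2 := hmemI i hiI
        have hL := hIlam i hi2
        have h1 : ε i * ε m = 1 := by rw [hie]; exact hεm2
        have h2 : ε i * lam l = ε m * lam l := by rw [hie]
        rw [h1, h2]
        nlinarith [mul_nonneg (by linarith : (0:ℝ) ≤ 1 + lam i + lam m)
          (by linarith : (0:ℝ) ≤ ε m * lam l + lam m)]
    have hpart2 : ∏ i ∈ S, ((1 + lam i - lam m) * (1 + lam i - ε m * lam l))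
        = ∏ i ∈ S, ((1 + lam i + ε i * ε m * lam m) * (1 + lam i + ε i * lam l)) := by
      refine prod_congr rfl ?_
      intro i hi
      obtain ⟨hiI, hie⟩ := mem_filter.mp hi
      have h1 : ε i * ε m = -1 := by
        rcases hε i with ha | ha <;> rcases hε m with hb | hb
        · exact absurd (ha.trans hb.symm) hie
        · rw [ha, hb]; norm_num
        · rw [ha, hb]; norm_num
        · exact absurd (ha.trans hb.symm) hie
      have h2 : ε i * lam l = -(ε m * lam l) := by
        rcases hε i with ha | ha <;> rcases hε m with hb | hb
        · exact absurd (ha.trans hb.symm) hie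
        · rw [ha, hb]; ring
        · rw [ha, hb]; ring
        · exact absurd (ha.trans hb.symm) hie
      rw [h1, h2]
      ring
    have hS0 : (0:ℝ) ≤ ∏ i ∈ S, ((1 + lam i - lam m) * (1 + lam i - ε m * lam l)) := by
      refine prod_nonneg ?_
      intro i hi
      have hi2 := hmemS i hi
      have := hIlam i hi2
      apply mul_nonneg <;> linarith
    refine mul_le_mul hpart1 (le_of_eq hpart2) hS0 ?_
    refine le_trans ?_ hpart1
    refine prod_nonneg ?_
    intro i hi
    have hi2 := hmemI i (mem_filter.mp hi).1
    have := hIlam i hi2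
    apply mul_nonneg <;> linarith
  -- the core inequality
  have hcore : (1 + lam m - ε m * lam l) * ∏ i ∈ S, (1 + lam i + lam m)
      ≤ (1 + 2 * lam m) ^ T.card * ∏ i ∈ S, (1 + lam i - ε m * lam l) := by
    have hpow : (1 + 2 * lam m) ^ (max S.card 1) ≤ (1 + 2 * lam m) ^ T.card :=
      pow_le_pow_right₀ (by linarith) hN'
    have hprod0 : (0:ℝ) ≤ ∏ i ∈ S, (1 + lam i - ε m * lam l) := by
      refine prod_nonneg ?_
      intro i hi
      have := hIlam i (hmemS i hi)
      linarith
    rcases S.eq_empty_or_nonempty with hSe | hSe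
    · rw [hSe]
      simp only [prod_empty, mul_one]
      have hTne : T.card ≠ 0 := by
        rw [hSe] at hN'
        simp only [card_empty] at hN'
        omega
      calc 1 + lam m - ε m * lam l ≤ 1 + 2 * lam m := by linarith
        _ ≤ (1 + 2 * lam m) ^ T.card := le_self_pow₀ (by linarith) hTne
    · obtain ⟨i₀, hi₀⟩ := hSe
      have hmax : max S.card 1 = S.card := max_eq_left (card_pos.mpr ⟨i₀, hi₀⟩)
      have step1 : (1 + lam m - ε m * lam l) * ∏ i ∈ S, (1 + lam i + lam m)
          ≤ ∏ i ∈ S, ((1 + 2 * lam m) * (1 + lam i - ε m * lam l)) := by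
        rw [← Finset.insert_erase hi₀, prod_insert (notMem_erase _ _),
          prod_insert (notMem_erase _ _), ← mul_assoc]
        have hi₀2 := hmemS i₀ hi₀
        refine mul_le_mul (Dn_key1 hc1 (hIlam i₀ hi₀2)) ?_ ?_ ?_
        · refine prod_le_prod ?_ ?_
          · intro i hi
            have := hIlam i (hmemS i (mem_of_mem_erase hi))
            linarith
          · intro i hi
            exact Dn_key2 ha0 hc2 (hIlam i (hmemS i (mem_of_mem_erase hi)))
        · refine prod_nonneg ?_
          intro i hi
          have := hIlam i (hmemS i (mem_of_mem_erase hi))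
          linarith
        · have := hIlam i₀ hi₀2
          apply mul_nonneg <;> linarith
      calc (1 + lam m - ε m * lam l) * ∏ i ∈ S, (1 + lam i + lam m)
          ≤ ∏ i ∈ S, ((1 + 2 * lam m) * (1 + lam i - ε m * lam l)) := step1
        _ = (1 + 2 * lam m) ^ S.card * ∏ i ∈ S, (1 + lam i - ε m * lam l) := by
            rw [prod_mul_distrib, prod_const]
        _ ≤ (1 + 2 * lam m) ^ T.card * ∏ i ∈ S, (1 + lam i - ε m * lam l) := by
            refine mul_le_mul_of_nonneg_right ?_ hprod0
            rw [← hmax]; exact hpow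
  -- assemble
  have hsplitI : ∏ i ∈ I, ((1 + lam i - lam m) * (1 + lam i + lam m))
      = (∏ i ∈ I.filter (fun i => ε i = ε m), ((1 + lam i - lam m) * (1 + lam i + lam m)))
      * ∏ i ∈ S, ((1 + lam i - lam m) * (1 + lam i + lam m)) :=
    (prod_filter_mul_prod_filter_not I (fun i => ε i = ε m) _).symm
  have hSsplit1 : ∏ i ∈ S, ((1 + lam i - lam m) * (1 + lam i + lam m))
      = (∏ i ∈ S, (1 + lam i - lam m)) * ∏ i ∈ S, (1 + lam i + lam m) := prod_mul_distrib
  have hSsplit2 : ∏ i ∈ S, ((1 + lam i - lam m) * (1 + lam i - ε m * lam l))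
      = (∏ i ∈ S, (1 + lam i - lam m)) * ∏ i ∈ S, (1 + lam i - ε m * lam l) := prod_mul_distrib
  -- nonnegativity facts
  have hQ0 : (0:ℝ) ≤ ∏ i ∈ I.filter (fun i => ε i = ε m),
      ((1 + lam i - lam m) * (1 + lam i + lam m)) := by
    refine prod_nonneg ?_
    intro i hi
    have := hIlam i (hmemI i (mem_filter.mp hi).1)
    apply mul_nonneg <;> linarith
  have hZ0 : (0:ℝ) ≤ ∏ i ∈ S, (1 + lam i - lam m) := by
    refine prod_nonneg ?_
    intro i hi
    have := hIlam i (hmemS i hi)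
    linarith
  have hF0 : (0:ℝ) ≤ 1 + lam m + ε m * lam l := by linarith
  have hpow0 : (0:ℝ) ≤ (1 + 2 * lam m) ^ T.card := pow_nonneg (by linarith) _
  have hG0 : (0:ℝ) ≤ G := by
    refine le_trans ?_ hG
    apply mul_nonneg hQ0
    rw [hSsplit2]
    refine mul_nonneg hZ0 ?_
    refine prod_nonneg ?_
    intro i hi
    have := hIlam i (hmemS i hi)
    linarith
  -- final chain
  calc (1 + lam m + ε m * lam l) * ((1 + lam m - ε m * lam l) *
        ∏ i ∈ I, ((1 + lam i - lam m) * (1 + lam i + lam m)))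
      = ((∏ i ∈ I.filter (fun i => ε i = ε m), ((1 + lam i - lam m) * (1 + lam i + lam m)))
          * ((∏ i ∈ S, (1 + lam i - lam m))
          * ((1 + lam m - ε m * lam l) * ∏ i ∈ S, (1 + lam i + lam m))))
        * (1 + lam m + ε m * lam l) := by
        rw [hsplitI, hSsplit1]; ring
    _ ≤ ((∏ i ∈ I.filter (fun i => ε i = ε m), ((1 + lam i - lam m) * (1 + lam i + lam m)))
          * ((∏ i ∈ S, (1 + lam i - lam m))
          * ((1 + 2 * lam m) ^ T.card * ∏ i ∈ S, (1 + lam i - ε m * lam l))))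
        * (1 + lam m + ε m * lam l) := by
        refine mul_le_mul_of_nonneg_right ?_ hF0
        refine mul_le_mul_of_nonneg_left ?_ hQ0
        exact mul_le_mul_of_nonneg_left hcore hZ0
    _ = (1 + 2 * lam m) ^ T.card *
          (((∏ i ∈ I.filter (fun i => ε i = ε m), ((1 + lam i - lam m) * (1 + lam i + lam m)))
          * ∏ i ∈ S, ((1 + lam i - lam m) * (1 + lam i - ε m * lam l)))
          * (1 + lam m + ε m * lam l)) := by
        rw [hSsplit2]; ring
    _ ≤ (1 + 2 * lam m) ^ T.card * (G * (1 + lam m + ε m * lam l)) := by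
        refine mul_le_mul_of_nonneg_left ?_ hpow0
        exact mul_le_mul_of_nonneg_right hG hF0
    _ ≤ D * (G * (1 + lam m + ε m * lam l)) := by
        refine mul_le_mul_of_nonneg_right hD ?_
        exact mul_nonneg hG0 hF0

/-- The key inequality for `Dₙ`, `n ≥ 5`: with `λ` dominant, `ε` a sign vector with
`ε_n = +1`, `x_η = λ_{n−1} + η λ_n`, `z_i = 1 + λ_i − λ_{n−1}`,
`N₁ = #{i ≤ n−2 : ε_i ≠ ε_{n−1}}` and `N₂ = #{(i,j) : i < j ≤ n−2, ε_i = ε_j}`, if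
`N₂ ≥ max(N₁, 1)` then
`∏_{i<j≤n}(1 + λ_i + ε_i ε_j λ_j) ≥ (1+x₁)(1+x₋₁) ∏_{i≤n−2} z_i (z_i + x₁ + x₋₁)`.
(Indices are `0`-based: `λ_k` of the paper is `lam ⟨k−1⟩`.) -/
theorem Dn_siegel_product_inequality (n : ℕ) (hn : 5 ≤ n) (lam : Fin n → ℝ)
    (hdom : ∀ i j : Fin n, i ≤ j → (j : ℕ) < n - 1 → lam j ≤ lam i)
    (hlast : |lam (⟨n - 1, by omega⟩ : Fin n)| ≤ lam (⟨n - 2, by omega⟩ : Fin n))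
    (ε : Fin n → ℝ) (hε : ∀ i, ε i = 1 ∨ ε i = -1)
    (hεn : ε (⟨n - 1, by omega⟩ : Fin n) = 1)
    (hN : max ((Finset.univ.filter
          (fun i : Fin n => (i : ℕ) < n - 2 ∧
            ε i ≠ ε (⟨n - 2, by omega⟩ : Fin n))).card) 1
        ≤ (Finset.univ.filter
          (fun p : Fin n × Fin n => p.1 < p.2 ∧ (p.2 : ℕ) < n - 2 ∧
            ε p.1 = ε p.2)).card) :
    (1 + (lam (⟨n - 2, by omega⟩ : Fin n) + lam (⟨n - 1, by omega⟩ : Fin n))) *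
      (1 + (lam (⟨n - 2, by omega⟩ : Fin n) - lam (⟨n - 1, by omega⟩ : Fin n))) *
      ∏ i ∈ Finset.univ.filter (fun i : Fin n => (i : ℕ) < n - 2),
        ((1 + lam i - lam (⟨n - 2, by omega⟩ : Fin n)) *
          ((1 + lam i - lam (⟨n - 2, by omega⟩ : Fin n)) +
            (lam (⟨n - 2, by omega⟩ : Fin n) + lam (⟨n - 1, by omega⟩ : Fin n)) +
            (lam (⟨n - 2, by omega⟩ : Fin n) - lam (⟨n - 1, by omega⟩ : Fin n))))
    ≤ ∏ p ∈ Finset.univ.filter (fun p : Fin n × Fin n => p.1 < p.2),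
        (1 + lam p.1 + ε p.1 * ε p.2 * lam p.2) := by
  exact Dn_aux n hn lam ε ⟨n - 2, by omega⟩ ⟨n - 1, by omega⟩ rfl rfl hdom hlast hε hεn hN
end
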